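/- arXiv:1511.03817 — 2 statements merged into one kernel-verified Lean document; each statement's English description precedes it below -/
import Mathlib

section
/- For every R > ‖τ′‖_∞ the function n ↦ 𝔫(τ,R;n) is sub-multiplicative: for all n, m ≥ 1, 𝔫(τ,R;n+m) ≤ 𝔫(τ,R′_m;n) · 𝔫(τ,R;m) ≤ 𝔫(τ,R;n) · 𝔫(τ,R;m), where R′_m = ‖τ′‖_∞ + λ^{−m}(R − ‖τ′‖_∞). -/
noncomputable section

open Filter Set Topology MeasureTheory

/-- The circle `ℝ/ℤ`. -/
abbrev 𝕊 : Type := UnitAddCircle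

/-- The canonical representative in `[0,1)` of a point of the circle. -/
def rep (x : 𝕊) : ℝ := (AddCircle.equivIco 1 0 x : ℝ)

/-- A `C^r` expanding map of the circle of degree `ℓ`, presented by a lift `ℝ → ℝ`,
together with the expansion constants `1 < λ ≤ Λ` bounding its derivative. -/
structure ExpMap (r : ℕ) (ℓ : ℕ) : Type where
  toFun : ℝ → ℝ
  contDiff : ContDiff ℝ r toFun
  degree : ∀ x : ℝ, toFun (x + 1) = toFun x + ℓ
  lam : ℝ
  Lam : ℝ
  one_lt_lam : 1 < lam
  lam_le_Lam : lam ≤ Lam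
  lam_le_deriv : ∀ x : ℝ, lam ≤ deriv toFun x
  deriv_le_Lam : ∀ x : ℝ, deriv toFun x ≤ Lam

/-- A real-valued `C^s` function on the circle, presented by a `1`-periodic lift. -/
structure CrFun (s : ℕ∞) : Type where
  toFun : ℝ → ℝ
  contDiff : ContDiff ℝ s toFun
  periodic : ∀ x : ℝ, toFun (x + 1) = toFun x

variable {r ℓ : ℕ}

/-- The induced map on the circle. -/
def ExpMap.map (E : ExpMap r ℓ) : 𝕊 → 𝕊 := fun x => ((E.toFun (rep x) : ℝ) : 𝕊)

/-- `(E^n)'(x)`, the derivative of the `n`-th iterate at a circle point. -/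
def ExpMap.derivn (E : ExpMap r ℓ) (n : ℕ) (x : 𝕊) : ℝ := deriv (E.toFun^[n]) (rep x)

/-- `‖τ'‖_∞`, the sup-norm of the derivative of `τ`. -/
def CrFun.dsup {s : ℕ∞} (τ : CrFun s) : ℝ :=
  sSup ((fun x => |deriv τ.toFun x|) '' Set.Icc (0:ℝ) 1)

/-- The skew product `f = f_{E,τ} : 𝕋² → 𝕋²`, `f(x,s) = (E x, s + τ x)`. -/
def skew (E : ExpMap r ℓ) {s : ℕ∞} (τ : CrFun s) : 𝕊 × 𝕊 → 𝕊 × 𝕊 :=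
  fun z => (E.map z.1, z.2 + ((τ.toFun (rep z.1) : ℝ) : 𝕊))

/-- The Jacobian matrix `Df(z)`, depending only on the base coordinate. -/
def Jac1 (E : ExpMap r ℓ) {s : ℕ∞} (τ : CrFun s) (x : 𝕊) : Matrix (Fin 2) (Fin 2) ℝ :=
  !![deriv E.toFun (rep x), 0; deriv τ.toFun (rep x), 1]

/-- The Jacobian matrix `Df^n(z)` of the `n`-th iterate. -/
def Jacn (E : ExpMap r ℓ) {s : ℕ∞} (τ : CrFun s) : ℕ → 𝕊 × 𝕊 → Matrix (Fin 2) (Fin 2) ℝ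
  | 0, _ => 1
  | n+1, z => Jacn E τ n (skew E τ z) * Jac1 E τ z.1

/-- `Df^n` as a function of the base point only. -/
def JacnB (E : ExpMap r ℓ) {s : ℕ∞} (τ : CrFun s) (n : ℕ) (x : 𝕊) : Matrix (Fin 2) (Fin 2) ℝ :=
  Jacn E τ n (x, (0 : 𝕊))

/-- The cone `K_R = {(ξ,η) : |η| ≤ ϑ_R |ξ|}` with `ϑ_R = R/(λ-1)`. -/
def ExpMap.cone (E : ExpMap r ℓ) (R : ℝ) : Set (Fin 2 → ℝ) :=
  {v | |v 1| ≤ R / (E.lam - 1) * |v 0|}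

/-- A unit vector of `ℝ²`. -/
def IsUnitVec (v : Fin 2 → ℝ) : Prop := v 0 ^ 2 + v 1 ^ 2 = 1

/-- `𝔫(τ,R;n) = sup_z sup_v #{ζ ∈ f^{-n}(z) : v ∈ Df^n(ζ) K_R}`. -/
def nQ (E : ExpMap r ℓ) {s : ℕ∞} (τ : CrFun s) (R : ℝ) (n : ℕ) : ℝ :=
  sSup {c : ℝ | ∃ (z : 𝕊 × 𝕊) (v : Fin 2 → ℝ), IsUnitVec v ∧
    c = ({ζ : 𝕊 × 𝕊 | (skew E τ)^[n] ζ = z ∧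
      v ∈ (Jacn E τ n ζ).mulVec '' E.cone R}.ncard : ℝ)}

/-- `𝔫(τ) = lim_n 𝔫(τ,R;n)^{1/n}` (computed with the choice `R = ‖τ'‖_∞ + 1`). -/
def nlim (E : ExpMap r ℓ) {s : ℕ∞} (τ : CrFun s) : ℝ :=
  limUnder atTop (fun n : ℕ => nQ E τ (τ.dsup + 1) n ^ ((n : ℝ)⁻¹))

/-- The `C^r` distance between two (lifts of) functions on the circle. -/
def crDist (r : ℕ) (f g : ℝ → ℝ) : ℝ :=
  sSup {c : ℝ | ∃ i ≤ r, ∃ x ∈ Set.Icc (0:ℝ) 1, c = |iteratedDeriv i f x - iteratedDeriv i g x|}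

/-- `x_α`: the preimage point of `x` coded by the word `α = (α_n, …, α_1)`,
given the system `g` of inverse branches of `E`; here `α i` is the letter `α_{i+1}`. -/
def codePt (g : Fin ℓ → 𝕊 → 𝕊) : {n : ℕ} → (Fin n → Fin ℓ) → 𝕊 → 𝕊
  | 0, _, x => x
  | n+1, α, x => g (α (Fin.last n)) (codePt g (fun i : Fin n => α i.castSucc) x)

/-- `[α]_p`, the truncation of a word to length `p`. -/
def trunc {ℓ n : ℕ} (α : Fin n → Fin ℓ) (p : ℕ) (h : p ≤ n) : Fin p → Fin ℓ :=
  fun i => α (Fin.castLE h i)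

/-- `S_n(x;α;ψ) = Σ_{k=1}^n ψ'(x_{[α]_k}) / (E^k)'(x_{[α]_k})`. -/
def Ssum (E : ExpMap r ℓ) (g : Fin ℓ → 𝕊 → 𝕊) (ψ : ℝ → ℝ) {n : ℕ}
    (α : Fin n → Fin ℓ) (x : 𝕊) : ℝ :=
  ∑ k : Fin n, deriv ψ (rep (codePt g (trunc α (k.1+1) k.isLt) x)) /
    E.derivn (k.1+1) (codePt g (trunc α (k.1+1) k.isLt) x)

/-- `S(x;ω) = Σ_{k=1}^∞ τ'(x_{[ω]_k}) / (E^k)'(x_{[ω]_k})` for an infinite word `ω`. -/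
def Sinf (E : ExpMap r ℓ) (g : Fin ℓ → 𝕊 → 𝕊) (ψ : ℝ → ℝ) (y : 𝕊) (ω : ℕ → Fin ℓ) : ℝ :=
  ∑' k : ℕ, deriv ψ (rep (codePt g (fun i : Fin (k+1) => ω i) y)) /
    E.derivn (k+1) (codePt g (fun i : Fin (k+1) => ω i) y)

/-- Faure's counting function `Ñ_{R̃}(n)`. -/
def Ntilde (E : ExpMap r ℓ) (g : Fin ℓ → 𝕊 → 𝕊) {s : ℕ∞} (τ : CrFun s) (Rt : ℝ) (n : ℕ) : ℝ :=
  sSup {c : ℝ | ∃ (y : 𝕊) (η : ℝ),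
    c = ({α : Fin n → Fin ℓ | ∃ ω : ℕ → Fin ℓ, (∀ i : Fin n, ω i = α i) ∧
      |η - Sinf E g τ.toFun y ω| ≤ Rt * (E.derivn n (codePt g α y))⁻¹}.ncard : ℝ)}

/-- `𝐧(τ,R;n)`. -/
def nnQ (E : ExpMap r ℓ) {s : ℕ∞} (τ : CrFun s) (R : ℝ) (n : ℕ) : ℝ :=
  sSup {c : ℝ | ∃ (z : 𝕊 × 𝕊) (v : Fin 2 → ℝ), IsUnitVec v ∧
    c = ∑ᶠ ζ ∈ {ζ : 𝕊 × 𝕊 | (skew E τ)^[n] ζ = z ∧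
        v ∈ (Jacn E τ n ζ).mulVec '' E.cone R}, ((Jacn E τ n ζ).det)⁻¹}

/-- `𝐧(τ) = limsup_n 𝐧(τ,R;n)^{1/n}` (with `R = ‖τ'‖_∞ + 1`). -/
def nnlim (E : ExpMap r ℓ) {s : ℕ∞} (τ : CrFun s) : ℝ :=
  limsup (fun n : ℕ => nnQ E τ (τ.dsup + 1) n ^ ((n : ℝ)⁻¹)) atTop

/-- `𝐦(τ,R;n)`. -/
def mmQ (E : ExpMap r ℓ) {s : ℕ∞} (τ : CrFun s) (R : ℝ) (n : ℕ) : ℝ :=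
  sSup {c : ℝ | ∃ (z w : 𝕊 × 𝕊), (skew E τ)^[n] w = z ∧
    c = ∑ᶠ ζ ∈ {ζ : 𝕊 × 𝕊 | (skew E τ)^[n] ζ = z ∧
        ((Jacn E τ n ζ).mulVec '' E.cone R) ∩ ((Jacn E τ n w).mulVec '' E.cone R) = {0}},
      ((Jacn E τ n ζ).det)⁻¹}

/-- `𝐦(τ) = limsup_n 𝐦(τ,R;n)^{1/n}` (with `R = ‖τ'‖_∞ + 1`). -/
def mmlim (E : ExpMap r ℓ) {s : ℕ∞} (τ : CrFun s) : ℝ :=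
  limsup (fun n : ℕ => mmQ E τ (τ.dsup + 1) n ^ ((n : ℝ)⁻¹)) atTop

/-- `χ = lim_n (min_x (E^n)'(x))^{-1/n}`. -/
def chi (E : ExpMap r ℓ) : ℝ :=
  limUnder atTop (fun n : ℕ => (sInf (Set.range (E.derivn n))) ^ (-((n : ℝ)⁻¹)))

/-- The Gram-determinant Jacobian `Jac(M) = √(det (M Mᵀ))` of a `p × m` matrix,
which equals the modulus of the Jacobian determinant of the restriction of the
associated linear map to the orthogonal complement of its kernel when the map is
surjective, and `0` otherwise. -/
def gramJac {p m : ℕ} (M : Matrix (Fin p) (Fin m) ℝ) : ℝ :=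
  Real.sqrt (M * M.transpose).det

/-- The Jacobian of a linear map between Euclidean spaces. -/
def linJac {d e : ℕ} (L : EuclideanSpace ℝ (Fin d) →ₗ[ℝ] EuclideanSpace ℝ (Fin e)) : ℝ :=
  gramJac (LinearMap.toMatrix (EuclideanSpace.basisFun (Fin d) ℝ).toBasis
    (EuclideanSpace.basisFun (Fin e) ℝ).toBasis L)


section Lemmas

variable {r ℓ : ℕ}

lemma rep_mem (x : 𝕊) : rep x ∈ Set.Ico (0:ℝ) 1 := by
  have h := (AddCircle.equivIco 1 0 x).2
  simpa [rep] using h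

lemma rep_coe (x : 𝕊) : ((rep x : ℝ) : 𝕊) = x := by
  change (AddCircle.equivIco 1 0).symm _ = x
  · exact (AddCircle.equivIco 1 0).symm_apply_apply x

lemma rep_injective : Function.Injective rep := by
  intro x y h
  have := congrArg (fun t : ℝ => (t : 𝕊)) h
  simpa [rep_coe] using this

lemma coe_eq_coe_iff (t a : ℝ) : (t : 𝕊) = (a : 𝕊) ↔ ∃ k : ℤ, t = a + k := by
  constructor
  · intro h
    have := QuotientAddGroup.eq_iff_sub_mem.mp h
    rw [AddSubgroup.mem_zmultiples_iff] at this
    obtain ⟨k, hk⟩ := this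
    rw [zsmul_eq_mul, mul_one] at hk
    exact ⟨k, by linarith⟩
  · rintro ⟨k, rfl⟩
    rw [QuotientAddGroup.eq_iff_sub_mem, AddSubgroup.mem_zmultiples_iff]
    exact ⟨k, by rw [zsmul_eq_mul, mul_one]; ring⟩

end Lemmas
section Lemmas2

variable {r ℓ : ℕ} {s : ℕ∞}

lemma ExpMap.strictMono (E : ExpMap r ℓ) (hr : 2 ≤ r) : StrictMono E.toFun :=
  strictMono_of_deriv_pos fun x => lt_of_lt_of_le (by linarith [E.one_lt_lam]) (E.lam_le_deriv x)

lemma CrFun.abs_deriv_le (τ : CrFun s) (hs : 1 ≤ s) {t : ℝ} (ht : t ∈ Set.Icc (0:ℝ) 1) :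
    |deriv τ.toFun t| ≤ τ.dsup := by
  apply le_csSup
  · exact IsCompact.bddAbove_image isCompact_Icc
      (Continuous.continuousOn ((τ.contDiff.continuous_deriv (by exact_mod_cast hs)).abs))
  · exact ⟨t, ht, rfl⟩

lemma CrFun.dsup_nonneg (τ : CrFun s) (hs : 1 ≤ s) : 0 ≤ τ.dsup :=
  le_trans (abs_nonneg _) (τ.abs_deriv_le hs (Set.mem_Icc.mpr ⟨le_refl (0:ℝ), zero_le_one⟩))

lemma CrFun.abs_deriv_rep_le (τ : CrFun s) (hs : 1 ≤ s) (x : 𝕊) :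
    |deriv τ.toFun (rep x)| ≤ τ.dsup :=
  τ.abs_deriv_le hs (Set.mem_Icc_of_Ico (rep_mem x))

end Lemmas2
section Lemmas3

variable {r ℓ : ℕ} {s : ℕ∞}

/-- Structure of the iterated Jacobian: lower unitriangular with controlled entries. -/
lemma jacn_struct (E : ExpMap r ℓ) (τ : CrFun s) (hs : 1 ≤ s) (n : ℕ) (ζ : 𝕊 × 𝕊) :
    ∃ A B : ℝ, Jacn E τ n ζ = !![A, 0; B, 1] ∧ E.lam ^ n ≤ A ∧
      |B| * (E.lam - 1) ≤ τ.dsup * (A - 1) := by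
  induction n generalizing ζ with
  | zero =>
    refine ⟨1, 0, ?_, by norm_num, by simp⟩
    simp [Jacn, Matrix.one_fin_two]
  | succ n ih =>
    obtain ⟨A, B, hAB, hA, hB⟩ := ih (skew E τ ζ)
    set a := deriv E.toFun (rep ζ.1) with ha
    set b := deriv τ.toFun (rep ζ.1) with hb
    have hlam1 : (1:ℝ) < E.lam := E.one_lt_lam
    have haL : E.lam ≤ a := E.lam_le_deriv _
    have hbd : |b| ≤ τ.dsup := τ.abs_deriv_rep_le hs ζ.1
    have hd0 : 0 ≤ τ.dsup := τ.dsup_nonneg hs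
    have hA1 : (1:ℝ) ≤ A := le_trans (one_le_pow₀ hlam1.le) hA
    refine ⟨A * a, B * a + b, ?_, ?_, ?_⟩
    · show Jacn E τ n (skew E τ ζ) * Jac1 E τ ζ.1 = _
      rw [hAB, Jac1, ← ha, ← hb]
      rw [Matrix.mul_fin_two]
      congr 1 <;> ring
    · calc E.lam ^ (n+1) = E.lam ^ n * E.lam := pow_succ _ _
        _ ≤ A * a := by
          apply mul_le_mul hA haL (by linarith) (by positivity)
    · have h1 : |B * a + b| ≤ |B| * a + |b| := by
        calc |B * a + b| ≤ |B * a| + |b| := abs_add_le _ _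
          _ = |B| * a + |b| := by rw [abs_mul, abs_of_pos (by linarith : (0:ℝ) < a)]
      have h2 : |B| * a * (E.lam - 1) ≤ τ.dsup * (A - 1) * a := by
        have := mul_le_mul_of_nonneg_right hB (by linarith : (0:ℝ) ≤ a)
        nlinarith
      nlinarith [abs_nonneg B]

/-- The base expansion factor is at least `λ`. -/
lemma jacn_comp (E : ExpMap r ℓ) (τ : CrFun s) (a b : ℕ) (ζ : 𝕊 × 𝕊) :
    Jacn E τ (a + b) ζ = Jacn E τ a ((skew E τ)^[b] ζ) * Jacn E τ b ζ := by
  induction b generalizing ζ with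
  | zero => simp [Jacn]
  | succ b ih =>
    show Jacn E τ (a + b + 1) ζ = _
    have h1 : Jacn E τ (a+b+1) ζ = Jacn E τ (a+b) (skew E τ ζ) * Jac1 E τ ζ.1 := rfl
    rw [h1, ih (skew E τ ζ)]
    have h2 : Jacn E τ (b+1) ζ = Jacn E τ b (skew E τ ζ) * Jac1 E τ ζ.1 := rfl
    rw [Function.iterate_succ_apply, h2, Matrix.mul_assoc]

end Lemmas3
section Lemmas4

variable {r ℓ : ℕ} {s : ℕ∞}

lemma mulVec_fin_two (A B : ℝ) (v : Fin 2 → ℝ) :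
    (!![A, 0; B, 1]).mulVec v = ![A * v 0, B * v 0 + v 1] := by
  funext i
  fin_cases i <;>
    simp [Matrix.mulVec, dotProduct, Fin.sum_univ_two]

lemma cone_mono (E : ExpMap r ℓ) {R' R : ℝ} (h : R' ≤ R) : E.cone R' ⊆ E.cone R := by
  intro v hv
  have hlam : (0:ℝ) < E.lam - 1 := by linarith [E.one_lt_lam]
  have hv' : |v 1| ≤ R' / (E.lam - 1) * |v 0| := hv
  show |v 1| ≤ R / (E.lam - 1) * |v 0|
  refine le_trans hv' (mul_le_mul_of_nonneg_right ?_ (abs_nonneg _))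
  gcongr

lemma cone_smul (E : ExpMap r ℓ) {R : ℝ} {v : Fin 2 → ℝ} (hv : v ∈ E.cone R) (c : ℝ) :
    c • v ∈ E.cone R := by
  have : |(c • v) 1| = |c| * |v 1| := by simp [abs_mul]
  have h0 : |(c • v) 0| = |c| * |v 0| := by simp [abs_mul]
  show |(c • v) 1| ≤ _
  rw [this, h0]
  calc |c| * |v 1| ≤ |c| * (R / (E.lam - 1) * |v 0|) :=
        mul_le_mul_of_nonneg_left hv (abs_nonneg c)
    _ = R / (E.lam - 1) * (|c| * |v 0|) := by ring

/-- The key cone-contraction estimate: `Df^m` maps `K_R` into `K_{R'_m}`. -/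
lemma cone_image (E : ExpMap r ℓ) (τ : CrFun s) (hs : 1 ≤ s) {R : ℝ} (hR : τ.dsup < R)
    (m : ℕ) (ζ : 𝕊 × 𝕊) {v : Fin 2 → ℝ} (hv : v ∈ E.cone R) :
    (Jacn E τ m ζ).mulVec v ∈ E.cone (τ.dsup + E.lam ^ (-(m : ℤ)) * (R - τ.dsup)) := by
  obtain ⟨A, B, hAB, hA, hB⟩ := jacn_struct E τ hs m ζ
  have hlam : (1:ℝ) < E.lam := E.one_lt_lam
  have hlm : (0:ℝ) < E.lam - 1 := by linarith
  have hpm : (0:ℝ) < E.lam ^ m := pow_pos (by linarith) m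
  have hApos : (0:ℝ) < A := lt_of_lt_of_le hpm hA
  have hzpow : E.lam ^ (-(m : ℤ)) = (E.lam ^ m)⁻¹ := by
    rw [zpow_neg, zpow_natCast]
  have hinv : 1 ≤ E.lam ^ (-(m : ℤ)) * A := by
    rw [hzpow, inv_mul_eq_div, le_div_iff₀ hpm, one_mul]
    exact hA
  rw [hAB, mulVec_fin_two]
  show |B * v 0 + v 1| ≤ _
  have hv' : |v 1| ≤ R / (E.lam - 1) * |v 0| := hv
  have hd0 : 0 ≤ τ.dsup := τ.dsup_nonneg hs
  have h1 : |B * v 0 + v 1| ≤ (|B| + R / (E.lam - 1)) * |v 0| := by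
    calc |B * v 0 + v 1| ≤ |B| * |v 0| + |v 1| := by
          refine le_trans (abs_add_le _ _) ?_
          rw [abs_mul]
      _ ≤ (|B| + R / (E.lam - 1)) * |v 0| := by nlinarith [abs_nonneg (v 0)]
  have h2 : Matrix.vecHead ![A * v 0, B * v 0 + v 1] = A * v 0 := rfl
  have key : (|B| + R / (E.lam - 1)) ≤
      (τ.dsup + E.lam ^ (-(m : ℤ)) * (R - τ.dsup)) / (E.lam - 1) * A := by
    rw [div_mul_eq_mul_div, le_div_iff₀ hlm]
    have hiA : (R - τ.dsup) ≤ E.lam ^ (-(m : ℤ)) * (R - τ.dsup) * A := by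
      nlinarith
    have hRdiv : R / (E.lam - 1) * (E.lam - 1) = R := div_mul_cancel₀ _ (ne_of_gt hlm)
    nlinarith [abs_nonneg B, hRdiv, hiA, hB]
  show |B * v 0 + v 1| ≤ _ * |![A * v 0, B * v 0 + v 1] 0|
  have h0 : |![A * v 0, B * v 0 + v 1] 0| = A * |v 0| := by
    show |A * v 0| = A * |v 0|
    rw [abs_mul, abs_of_pos hApos]
  rw [h0]
  calc |B * v 0 + v 1| ≤ (|B| + R / (E.lam - 1)) * |v 0| := h1
    _ ≤ (τ.dsup + E.lam ^ (-(m : ℤ)) * (R - τ.dsup)) / (E.lam - 1) * A * |v 0| :=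
        mul_le_mul_of_nonneg_right key (abs_nonneg _)
    _ = (τ.dsup + E.lam ^ (-(m : ℤ)) * (R - τ.dsup)) / (E.lam - 1) * (A * |v 0|) := by ring

lemma Rprime_le (E : ExpMap r ℓ) (τ : CrFun s) (hs : 1 ≤ s) {R : ℝ} (hR : τ.dsup < R) (m : ℕ) :
    τ.dsup + E.lam ^ (-(m : ℤ)) * (R - τ.dsup) ≤ R := by
  have hlam : (1:ℝ) < E.lam := E.one_lt_lam
  have h1 : E.lam ^ (-(m : ℤ)) ≤ 1 := by
    rw [zpow_neg, zpow_natCast]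
    exact inv_le_one_of_one_le₀ (one_le_pow₀ hlam.le)
  nlinarith [h1]

lemma Rprime_pos (E : ExpMap r ℓ) (τ : CrFun s) (hs : 1 ≤ s) {R : ℝ} (hR : τ.dsup < R) (m : ℕ) :
    τ.dsup < τ.dsup + E.lam ^ (-(m : ℤ)) * (R - τ.dsup) := by
  have hlam : (1:ℝ) < E.lam := E.one_lt_lam
  have h1 : 0 < E.lam ^ (-(m : ℤ)) := by positivity
  nlinarith

end Lemmas4
section Lemmas5

variable {r ℓ : ℕ} {s : ℕ∞}

/-- Fiber-counting bound, real-valued version. -/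
lemma ncard_le_mul_of_fibers {α β : Type*} {S : Set α} (hS : S.Finite) (g : α → β)
    {T : Set β} (hT : T.Finite) (hmaps : ∀ a ∈ S, g a ∈ T) {K : ℝ} (hK : 0 ≤ K)
    (h : ∀ b ∈ T, (({a ∈ S | g a = b}).ncard : ℝ) ≤ K) :
    (S.ncard : ℝ) ≤ (T.ncard : ℝ) * K := by
  classical
  rw [Set.ncard_eq_toFinset_card _ hS, Set.ncard_eq_toFinset_card _ hT]
  rw [Finset.card_eq_sum_card_fiberwise (f := g) (t := hT.toFinset)
      (fun a ha => hT.mem_toFinset.mpr (hmaps a (hS.mem_toFinset.mp ha)))]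
  push_cast
  calc (∑ b ∈ hT.toFinset, ((hS.toFinset.filter fun a => g a = b).card : ℝ))
      ≤ ∑ _b ∈ hT.toFinset, K := by
        apply Finset.sum_le_sum
        intro b hb
        have hset : {a ∈ S | g a = b} = ↑(hS.toFinset.filter fun a => g a = b) := by
          ext a
          simp [Set.mem_sep_iff, hS.mem_toFinset]
        have := h b (hT.mem_toFinset.mp hb)
        rwa [hset, Set.ncard_coe_finset] at this
    _ = (hT.toFinset.card : ℝ) * K := by rw [Finset.sum_const, nsmul_eq_mul]

/-- The fiber of a point under `E.map` is finite, of cardinality at most `ℓ + 1`. -/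
lemma premap_finite (E : ExpMap r ℓ) (hr : 2 ≤ r) (w : 𝕊) :
    {x : 𝕊 | E.map x = w}.Finite ∧ ({x : 𝕊 | E.map x = w}.ncard : ℝ) ≤ (ℓ : ℝ) + 1 := by
  classical
  set c := E.toFun 0 with hc
  set a := rep w with ha
  set φ : 𝕊 → ℝ := fun x => E.toFun (rep x) with hφ
  have hφinj : Function.Injective φ :=
    fun x y h => rep_injective ((E.strictMono hr).injective h)
  set k0 : ℤ := ⌈c - a⌉ with hk0
  set T : Set ℝ := (fun k : ℤ => a + k) '' (Set.Icc k0 (k0 + ℓ)) with hT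
  have hTfin : T.Finite := (Set.finite_Icc _ _).image _
  have hTcard : (T.ncard : ℝ) ≤ (ℓ : ℝ) + 1 := by
    have h2 : (Set.Icc k0 (k0 + ℓ)).ncard = ℓ + 1 := by
      rw [← Finset.coe_Icc, Set.ncard_coe_finset, Int.card_Icc]
      omega
    have himg : T.ncard = (Set.Icc k0 (k0 + ℓ)).ncard := Set.ncard_image_of_injOn
      (Set.injOn_of_injective (fun k1 k2 h => by exact_mod_cast add_left_cancel h))
    rw [himg, h2]
    simp
  have hsub : φ '' {x : 𝕊 | E.map x = w} ⊆ T := by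
    rintro t ⟨x, hx, rfl⟩
    have hrx := rep_mem x
    have hmono := (E.strictMono hr).monotone
    have hb1 : c ≤ φ x := hmono hrx.1
    have hb2 : φ x ≤ c + ℓ := by
      have : E.toFun (rep x) ≤ E.toFun 1 := hmono hrx.2.le
      rw [show (1:ℝ) = 0 + 1 by ring, E.degree 0] at this
      exact this
    have hcoe : ((φ x : ℝ) : 𝕊) = w := hx
    have haw : ((a : ℝ) : 𝕊) = w := rep_coe w
    have : ((φ x : ℝ) : 𝕊) = ((a : ℝ) : 𝕊) := by rw [hcoe, haw]
    obtain ⟨k, hk⟩ := (coe_eq_coe_iff _ _).mp this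
    refine ⟨k, ?_, hk.symm⟩
    constructor
    · rw [hk0]
      apply Int.ceil_le.mpr
      linarith
    · have : (k : ℝ) ≤ c - a + ℓ := by linarith
      have h2 : (k : ℝ) ≤ (k0 : ℝ) + ℓ := by
        have := Int.le_ceil (c - a)
        push_cast
        linarith
      exact_mod_cast h2
  have hfin : {x : 𝕊 | E.map x = w}.Finite := by
    apply Set.Finite.of_finite_image (hTfin.subset hsub) (Set.injOn_of_injective hφinj)
  refine ⟨hfin, ?_⟩
  have h3 : ({x : 𝕊 | E.map x = w}.ncard : ℝ) = ((φ '' {x : 𝕊 | E.map x = w}).ncard : ℝ) := by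
    rw [Set.ncard_image_of_injOn (Set.injOn_of_injective hφinj)]
  rw [h3]
  calc ((φ '' {x : 𝕊 | E.map x = w}).ncard : ℝ) ≤ (T.ncard : ℝ) := by
        exact_mod_cast Nat.cast_le.mpr (Set.ncard_le_ncard hsub hTfin)
    _ ≤ (ℓ : ℝ) + 1 := hTcard

/-- The fiber of a point under the skew product is finite, of cardinality at most `ℓ + 1`. -/
lemma preskew_finite (E : ExpMap r ℓ) (τ : CrFun s) (hr : 2 ≤ r) (w : 𝕊 × 𝕊) :
    {ζ : 𝕊 × 𝕊 | skew E τ ζ = w}.Finite ∧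
      ({ζ : 𝕊 × 𝕊 | skew E τ ζ = w}.ncard : ℝ) ≤ (ℓ : ℝ) + 1 := by
  obtain ⟨hfin, hcard⟩ := premap_finite E hr w.1
  have hinj : Set.InjOn Prod.fst {ζ : 𝕊 × 𝕊 | skew E τ ζ = w} := by
    rintro ⟨x1, s1⟩ h1 ⟨x2, s2⟩ h2 h
    simp only [Set.mem_setOf_eq, skew, Prod.ext_iff] at h1 h2
    simp only at h
    subst h
    have hs12 : s1 = s2 := by
      have e1 := h1.2
      have e2 := h2.2
      rw [← e2] at e1
      exact add_right_cancel e1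
    rw [hs12]
  have hsub : Prod.fst '' {ζ : 𝕊 × 𝕊 | skew E τ ζ = w} ⊆ {x : 𝕊 | E.map x = w.1} := by
    rintro x ⟨ζ, hζ, rfl⟩
    exact congrArg Prod.fst hζ
  have hfin2 : {ζ : 𝕊 × 𝕊 | skew E τ ζ = w}.Finite :=
    Set.Finite.of_finite_image (hfin.subset hsub) hinj
  refine ⟨hfin2, ?_⟩
  have h3 := Set.ncard_image_of_injOn hinj
  calc ({ζ : 𝕊 × 𝕊 | skew E τ ζ = w}.ncard : ℝ)
      = ((Prod.fst '' {ζ : 𝕊 × 𝕊 | skew E τ ζ = w}).ncard : ℝ) := by rw [h3]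
    _ ≤ ({x : 𝕊 | E.map x = w.1}.ncard : ℝ) := by
        exact_mod_cast Nat.cast_le.mpr (Set.ncard_le_ncard hsub hfin)
    _ ≤ (ℓ : ℝ) + 1 := hcard

/-- The fiber of a point under the `n`-th iterate of the skew product. -/
lemma preiter_finite (E : ExpMap r ℓ) (τ : CrFun s) (hr : 2 ≤ r) (n : ℕ) (z : 𝕊 × 𝕊) :
    {ζ : 𝕊 × 𝕊 | (skew E τ)^[n] ζ = z}.Finite ∧
      ({ζ : 𝕊 × 𝕊 | (skew E τ)^[n] ζ = z}.ncard : ℝ) ≤ ((ℓ : ℝ) + 1) ^ n := by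
  induction n generalizing z with
  | zero =>
    constructor
    · simpa using Set.finite_singleton z
    · have : {ζ : 𝕊 × 𝕊 | (skew E τ)^[0] ζ = z} = {z} := by ext; simp
      rw [this]
      simp
  | succ n ih =>
    have hdecomp : {ζ : 𝕊 × 𝕊 | (skew E τ)^[n+1] ζ = z} =
        ⋃ w ∈ {w : 𝕊 × 𝕊 | (skew E τ)^[n] w = z}, {ζ : 𝕊 × 𝕊 | skew E τ ζ = w} := by
      ext ζ
      simp only [Set.mem_setOf_eq, Set.mem_iUnion, exists_prop]
      constructor
      · intro h
        exact ⟨skew E τ ζ, by rwa [← Function.iterate_succ_apply], rfl⟩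
      · rintro ⟨w, hw, rfl⟩
        rw [Function.iterate_succ_apply]
        exact hw
    obtain ⟨hSn, hcn⟩ := ih z
    have hfin : {ζ : 𝕊 × 𝕊 | (skew E τ)^[n+1] ζ = z}.Finite := by
      rw [hdecomp]
      exact hSn.biUnion (fun w _ => (preskew_finite E τ hr w).1)
    refine ⟨hfin, ?_⟩
    have hmaps : ∀ ζ ∈ {ζ : 𝕊 × 𝕊 | (skew E τ)^[n+1] ζ = z},
        skew E τ ζ ∈ {w : 𝕊 × 𝕊 | (skew E τ)^[n] w = z} := by
      intro ζ hζ
      simp only [Set.mem_setOf_eq] at hζ ⊢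
      rwa [← Function.iterate_succ_apply]
    have key := ncard_le_mul_of_fibers hfin (skew E τ) hSn hmaps
      (K := (ℓ : ℝ) + 1) (by positivity) ?_
    · calc ({ζ : 𝕊 × 𝕊 | (skew E τ)^[n+1] ζ = z}.ncard : ℝ)
          ≤ ({w : 𝕊 × 𝕊 | (skew E τ)^[n] w = z}.ncard : ℝ) * ((ℓ : ℝ) + 1) := key
        _ ≤ ((ℓ : ℝ) + 1) ^ n * ((ℓ : ℝ) + 1) := by
            apply mul_le_mul_of_nonneg_right hcn (by positivity)
        _ = ((ℓ : ℝ) + 1) ^ (n + 1) := by rw [pow_succ]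
    · intro w hw
      refine le_trans ?_ (preskew_finite E τ hr w).2
      apply Nat.cast_le.mpr
      apply Set.ncard_le_ncard _ (preskew_finite E τ hr w).1
      intro ζ hζ
      exact hζ.2

end Lemmas5
section Lemmas6

variable {r ℓ : ℕ} {s : ℕ∞}

/-- The set counted in the definition of `𝔫(τ,R;n)`. -/
def Pset (E : ExpMap r ℓ) (τ : CrFun s) (R : ℝ) (n : ℕ) (z : 𝕊 × 𝕊) (v : Fin 2 → ℝ) :
    Set (𝕊 × 𝕊) :=
  {ζ : 𝕊 × 𝕊 | (skew E τ)^[n] ζ = z ∧ v ∈ (Jacn E τ n ζ).mulVec '' E.cone R}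

lemma nQ_eq (E : ExpMap r ℓ) (τ : CrFun s) (R : ℝ) (n : ℕ) :
    nQ E τ R n = sSup {c : ℝ | ∃ (z : 𝕊 × 𝕊) (v : Fin 2 → ℝ), IsUnitVec v ∧
      c = ((Pset E τ R n z v).ncard : ℝ)} := rfl

lemma Pset_finite (E : ExpMap r ℓ) (τ : CrFun s) (hr : 2 ≤ r) (R : ℝ) (n : ℕ)
    (z : 𝕊 × 𝕊) (v : Fin 2 → ℝ) : (Pset E τ R n z v).Finite :=
  (preiter_finite E τ hr n z).1.subset (fun ζ (h : ζ ∈ Pset E τ R n z v) => h.1)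

lemma Pset_card_le (E : ExpMap r ℓ) (τ : CrFun s) (hr : 2 ≤ r) (R : ℝ) (n : ℕ)
    (z : 𝕊 × 𝕊) (v : Fin 2 → ℝ) :
    ((Pset E τ R n z v).ncard : ℝ) ≤ ((ℓ : ℝ) + 1) ^ n := by
  refine le_trans ?_ (preiter_finite E τ hr n z).2
  exact_mod_cast Nat.cast_le.mpr
    (Set.ncard_le_ncard (fun ζ (h : ζ ∈ Pset E τ R n z v) => h.1)
      (preiter_finite E τ hr n z).1)

lemma unitVec_exists : IsUnitVec ![1, 0] := by
  show (1:ℝ) ^ 2 + (0:ℝ) ^ 2 = 1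
  norm_num

lemma nQ_set_nonempty (E : ExpMap r ℓ) (τ : CrFun s) (R : ℝ) (n : ℕ) :
    {c : ℝ | ∃ (z : 𝕊 × 𝕊) (v : Fin 2 → ℝ), IsUnitVec v ∧
      c = ((Pset E τ R n z v).ncard : ℝ)}.Nonempty :=
  ⟨_, ⟨(0, 0), ![1, 0], unitVec_exists, rfl⟩⟩

lemma nQ_set_bdd (E : ExpMap r ℓ) (τ : CrFun s) (hr : 2 ≤ r) (R : ℝ) (n : ℕ) :
    BddAbove {c : ℝ | ∃ (z : 𝕊 × 𝕊) (v : Fin 2 → ℝ), IsUnitVec v ∧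
      c = ((Pset E τ R n z v).ncard : ℝ)} := by
  refine ⟨((ℓ : ℝ) + 1) ^ n, ?_⟩
  rintro c ⟨z, v, hv, rfl⟩
  exact Pset_card_le E τ hr R n z v

lemma Pset_card_le_nQ (E : ExpMap r ℓ) (τ : CrFun s) (hr : 2 ≤ r) (R : ℝ) (n : ℕ)
    (z : 𝕊 × 𝕊) {v : Fin 2 → ℝ} (hv : IsUnitVec v) :
    ((Pset E τ R n z v).ncard : ℝ) ≤ nQ E τ R n := by
  rw [nQ_eq]
  exact le_csSup (nQ_set_bdd E τ hr R n) ⟨z, v, hv, rfl⟩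

lemma nQ_nonneg (E : ExpMap r ℓ) (τ : CrFun s) (hr : 2 ≤ r) (R : ℝ) (n : ℕ) :
    0 ≤ nQ E τ R n :=
  le_trans (Nat.cast_nonneg _) (Pset_card_le_nQ E τ hr R n (0,0) unitVec_exists)

lemma nQ_mono (E : ExpMap r ℓ) (τ : CrFun s) (hr : 2 ≤ r) {R' R : ℝ} (h : R' ≤ R) (n : ℕ) :
    nQ E τ R' n ≤ nQ E τ R n := by
  rw [nQ_eq]
  apply csSup_le (nQ_set_nonempty E τ R' n)
  rintro c ⟨z, v, hv, rfl⟩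
  refine le_trans ?_ (Pset_card_le_nQ E τ hr R n z hv)
  apply Nat.cast_le.mpr
  apply Set.ncard_le_ncard _ (Pset_finite E τ hr R n z v)
  rintro ζ ⟨h1, h2⟩
  exact ⟨h1, Set.image_mono (cone_mono E h) h2⟩

lemma isUnitVec_ne_zero {v : Fin 2 → ℝ} (hv : IsUnitVec v) : v ≠ 0 := by
  intro h0
  have := hv
  rw [IsUnitVec, h0] at this
  norm_num at this

end Lemmas6
section Lemmas7

variable {r ℓ : ℕ} {s : ℕ∞}

lemma main_count (E : ExpMap r ℓ) (τ : CrFun s) (hr : 2 ≤ r) (hs : 1 ≤ s)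
    {R : ℝ} (hR : τ.dsup < R) (n m : ℕ) (z : 𝕊 × 𝕊) {v : Fin 2 → ℝ} (hv : IsUnitVec v) :
    ((Pset E τ R (n + m) z v).ncard : ℝ) ≤
      nQ E τ (τ.dsup + E.lam ^ (-(m : ℤ)) * (R - τ.dsup)) n * nQ E τ R m := by
  classical
  set R' := τ.dsup + E.lam ^ (-(m : ℤ)) * (R - τ.dsup) with hR'
  have hfinP := Pset_finite E τ hr R (n + m) z v
  have hfinQ := Pset_finite E τ hr R' n z v
  have hmaps : ∀ ζ ∈ Pset E τ R (n + m) z v, (skew E τ)^[m] ζ ∈ Pset E τ R' n z v := by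
    rintro ζ ⟨h1, u, hu, huv⟩
    refine ⟨?_, ?_⟩
    · rw [← Function.iterate_add_apply]
      exact h1
    · refine ⟨(Jacn E τ m ζ).mulVec u, cone_image E τ hs hR m ζ hu, ?_⟩
      rw [Matrix.mulVec_mulVec, ← jacn_comp]
      exact huv
  have hfiber : ∀ ξ ∈ Pset E τ R' n z v,
      (({ζ ∈ Pset E τ R (n + m) z v | (skew E τ)^[m] ζ = ξ}).ncard : ℝ) ≤ nQ E τ R m := by
    intro ξ hξ
    obtain ⟨A, B, hAB, hA, hB⟩ := jacn_struct E τ hs n ξ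
    set M := Jacn E τ n ξ with hM
    have hApos : (0 : ℝ) < A :=
      lt_of_lt_of_le (pow_pos (lt_trans one_pos E.one_lt_lam) n) hA
    have hdet : IsUnit M.det := by
      rw [hAB, Matrix.det_fin_two_of]
      simpa using isUnit_iff_ne_zero.mpr (ne_of_gt hApos)
    set w := M⁻¹.mulVec v with hw
    have hMw : M.mulVec w = v := by
      rw [hw, Matrix.mulVec_mulVec, Matrix.mul_nonsing_inv _ hdet, Matrix.one_mulVec]
    have hwkey : ∀ ζ, ζ ∈ Pset E τ R (n + m) z v → (skew E τ)^[m] ζ = ξ →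
        w ∈ (Jacn E τ m ζ).mulVec '' E.cone R := by
      rintro ζ ⟨h1, u, hu, huv⟩ h2
      refine ⟨u, hu, ?_⟩
      have hv' : M.mulVec ((Jacn E τ m ζ).mulVec u) = v := by
        rw [Matrix.mulVec_mulVec, hM, ← h2, ← jacn_comp]
        exact huv
      rw [hw, ← hv', Matrix.mulVec_mulVec, Matrix.nonsing_inv_mul _ hdet,
        Matrix.one_mulVec]
    have hvne : v ≠ 0 := isUnitVec_ne_zero hv
    have hwne : w ≠ 0 := fun h => hvne (by rw [← hMw, h, Matrix.mulVec_zero])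
    have hcns : (0 : ℝ) < w 0 ^ 2 + w 1 ^ 2 := by
      rcases lt_or_eq_of_le (by positivity : (0:ℝ) ≤ w 0 ^ 2 + w 1 ^ 2) with h | h
      · exact h
      · exfalso
        apply hwne
        have h0 : w 0 = 0 := by nlinarith [sq_nonneg (w 0), sq_nonneg (w 1)]
        have h1 : w 1 = 0 := by nlinarith [sq_nonneg (w 0), sq_nonneg (w 1)]
        funext i
        fin_cases i <;> assumption
    set cc := (Real.sqrt (w 0 ^ 2 + w 1 ^ 2))⁻¹ with hcc
    have hccpos : 0 < cc := inv_pos.mpr (Real.sqrt_pos.mpr hcns)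
    have hvhat : IsUnitVec (cc • w) := by
      show (cc • w) 0 ^ 2 + (cc • w) 1 ^ 2 = 1
      have e0 : (cc • w) 0 = cc * w 0 := rfl
      have e1 : (cc • w) 1 = cc * w 1 := rfl
      rw [e0, e1]
      have hsq : Real.sqrt (w 0 ^ 2 + w 1 ^ 2) ^ 2 = w 0 ^ 2 + w 1 ^ 2 :=
        Real.sq_sqrt hcns.le
      have hring : (cc * w 0) ^ 2 + (cc * w 1) ^ 2 = cc ^ 2 * (w 0 ^ 2 + w 1 ^ 2) := by
        ring
      rw [hring, hcc, inv_pow, Real.sq_sqrt hcns.le]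
      exact inv_mul_cancel₀ hcns.ne'
    have hsubset : {ζ ∈ Pset E τ R (n + m) z v | (skew E τ)^[m] ζ = ξ} ⊆
        Pset E τ R m ξ (cc • w) := by
      rintro ζ ⟨hζP, h2⟩
      refine ⟨h2, ?_⟩
      obtain ⟨u', hu', huw⟩ := hwkey ζ hζP h2
      exact ⟨cc • u', cone_smul E hu' cc, by rw [Matrix.mulVec_smul, huw]⟩
    calc (({ζ ∈ Pset E τ R (n + m) z v | (skew E τ)^[m] ζ = ξ}).ncard : ℝ)
        ≤ ((Pset E τ R m ξ (cc • w)).ncard : ℝ) := by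
          exact_mod_cast Nat.cast_le.mpr
            (Set.ncard_le_ncard hsubset (Pset_finite E τ hr R m ξ (cc • w)))
      _ ≤ nQ E τ R m := Pset_card_le_nQ E τ hr R m ξ hvhat
  have key := ncard_le_mul_of_fibers hfinP ((skew E τ)^[m]) hfinQ hmaps
    (nQ_nonneg E τ hr R m) hfiber
  calc ((Pset E τ R (n + m) z v).ncard : ℝ)
      ≤ ((Pset E τ R' n z v).ncard : ℝ) * nQ E τ R m := key
    _ ≤ nQ E τ R' n * nQ E τ R m :=
        mul_le_mul_of_nonneg_right (Pset_card_le_nQ E τ hr R' n z hv)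
          (nQ_nonneg E τ hr R m)

end Lemmas7

/-- For every `R > ‖τ'‖_∞`, the function `n ↦ 𝔫(τ,R;n)` is
sub-multiplicative: for all `n, m ≥ 1`,
`𝔫(τ,R;n+m) ≤ 𝔫(τ,R'_m;n) ⬝ 𝔫(τ,R;m) ≤ 𝔫(τ,R;n) ⬝ 𝔫(τ,R;m)`,
where `R'_m = ‖τ'‖_∞ + λ^{-m}(R - ‖τ'‖_∞)`. -/
theorem stmt3 (r ℓ : ℕ) (hr : 2 ≤ r) (hl : 2 ≤ ℓ) (E : ExpMap r ℓ) (τ : CrFun r)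
    (R : ℝ) (hR : τ.dsup < R) (n m : ℕ) (hn : 1 ≤ n) (hm : 1 ≤ m) :
    nQ E τ R (n + m) ≤
        nQ E τ (τ.dsup + E.lam ^ (-(m : ℤ)) * (R - τ.dsup)) n * nQ E τ R m ∧
      nQ E τ (τ.dsup + E.lam ^ (-(m : ℤ)) * (R - τ.dsup)) n * nQ E τ R m ≤
        nQ E τ R n * nQ E τ R m := by
  have hs : (1 : ℕ∞) ≤ (r : ℕ∞) := by
    exact_mod_cast Nat.one_le_cast.mpr (le_trans one_le_two hr)
  constructor
  · rw [nQ_eq E τ R (n + m)]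
    apply csSup_le (nQ_set_nonempty E τ R (n + m))
    rintro c ⟨z, v, hv, rfl⟩
    exact main_count E τ hr hs hR n m z hv
  · exact mul_le_mul_of_nonneg_right
      (nQ_mono E τ hr (Rprime_le E τ hs hR m) n) (nQ_nonneg E τ hr R m)
end
end

section
/- Let D be a bounded open subset of C^r(S¹) and fix R with R > ‖τ′‖_∞ for all τ ∈ D. For every ρ > 0, the set {τ ∈ D : 𝔫(τ) < e^ρ} is open in the C^r topology; that is, 𝔫(τ) < e^ρ is an open condition on τ. -/
noncomputable section

open Filter Set Topology MeasureTheory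

variable {r ℓ : ℕ}

namespace St5
open Filter Set

variable {r ℓ : ℕ}

/-! ### rep and circle basics -/

lemma rep_mem (x : 𝕊) : rep x ∈ Set.Ico (0:ℝ) 1 := by
  have := (AddCircle.equivIco 1 0 x).2
  simpa [rep] using this

lemma rep_inj : Function.Injective rep := by
  intro x y h
  have : (AddCircle.equivIco 1 0 x : ℝ) = (AddCircle.equivIco 1 0 y : ℝ) := h
  exact (AddCircle.equivIco 1 0).injective (Subtype.ext this)

lemma coe_rep (x : 𝕊) : ((rep x : ℝ) : 𝕊) = x := by
  have h2 : ((AddCircle.equivIco 1 0).symm (AddCircle.equivIco 1 0 x)) = x :=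
    (AddCircle.equivIco 1 0).symm_apply_apply x
  have h3 : (AddCircle.equivIco 1 0).symm (AddCircle.equivIco 1 0 x)
      = ((AddCircle.equivIco 1 0 x : ℝ) : 𝕊) := rfl
  exact h3.symm.trans h2

end St5
namespace St5
open Filter Set

variable {r ℓ : ℕ}

/-! ### Expanding map basics -/

lemma E_deriv_pos (E : ExpMap r ℓ) (x : ℝ) : 0 < deriv E.toFun x :=
  lt_of_lt_of_le (lt_trans one_pos E.one_lt_lam) (E.lam_le_deriv x)

lemma E_lam_pos (E : ExpMap r ℓ) : (0:ℝ) < E.lam := lt_trans one_pos E.one_lt_lam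

lemma E_lam1_pos (E : ExpMap r ℓ) : (0:ℝ) < E.lam - 1 := by
  have := E.one_lt_lam; linarith

lemma E_strictMono (E : ExpMap r ℓ) : StrictMono E.toFun :=
  strictMono_of_deriv_pos (E_deriv_pos E)

lemma E_one (E : ExpMap r ℓ) : E.toFun 1 = E.toFun 0 + ℓ := by
  have := E.degree 0; simpa using this

/-! ### The structure of the Jacobian matrices -/

/-- `A E n x` : the `(E^n)'`-entry of the Jacobian. -/
def A (E : ExpMap r ℓ) : ℕ → 𝕊 → ℝ
  | 0, _ => 1
  | n+1, x => A E n (E.map x) * deriv E.toFun (rep x)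

/-- `B E φ n x` : the lower-left entry of the Jacobian, driven by `φ`. -/
def B (E : ExpMap r ℓ) (φ : ℝ → ℝ) : ℕ → 𝕊 → ℝ
  | 0, _ => 0
  | n+1, x => B E φ n (E.map x) * deriv E.toFun (rep x) + φ (rep x)

lemma skew_fst (E : ExpMap r ℓ) {s : ℕ∞} (σ : CrFun s) (ζ : 𝕊 × 𝕊) :
    (skew E σ ζ).1 = E.map ζ.1 := rfl

lemma jacn_eq (E : ExpMap r ℓ) {s : ℕ∞} (σ : CrFun s) :
    ∀ (n : ℕ) (ζ : 𝕊 × 𝕊),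
      Jacn E σ n ζ = !![A E n ζ.1, 0; B E (deriv σ.toFun) n ζ.1, 1]
  | 0, ζ => by
    simp [Jacn, A, B, Matrix.one_fin_two]
  | n+1, ζ => by
    rw [Jacn, jacn_eq E σ n (skew E σ ζ), Jac1, skew_fst, Matrix.mul_fin_two]
    simp only [A, B]
    congr 1 <;> ring_nf

lemma A_one_le (E : ExpMap r ℓ) : ∀ (n : ℕ) (x : 𝕊), 1 ≤ A E n x
  | 0, x => le_refl 1
  | n+1, x => by
    have h1 := A_one_le E n (E.map x)
    have h2 := E.lam_le_deriv (rep x)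
    have := E.one_lt_lam
    rw [A]
    nlinarith

lemma A_pos (E : ExpMap r ℓ) (n : ℕ) (x : 𝕊) : 0 < A E n x :=
  lt_of_lt_of_le one_pos (A_one_le E n x)

lemma lam_pow_le_A (E : ExpMap r ℓ) : ∀ (n : ℕ) (x : 𝕊), E.lam ^ n ≤ A E n x
  | 0, x => by simp [A]
  | n+1, x => by
    have h1 := lam_pow_le_A E n (E.map x)
    have h2 := E.lam_le_deriv (rep x)
    have h3 : (0:ℝ) < E.lam ^ n := pow_pos (E_lam_pos E) n
    have h4 := A_pos E n (E.map x)
    rw [A, pow_succ]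
    nlinarith [mul_le_mul_of_nonneg_left h2 h3.le, mul_le_mul_of_nonneg_right h1 (le_trans (le_of_lt (E_lam_pos E)) h2)]

lemma A_le_Lam_pow (E : ExpMap r ℓ) : ∀ (n : ℕ) (x : 𝕊), A E n x ≤ E.Lam ^ n
  | 0, x => by simp [A]
  | n+1, x => by
    have h1 := A_le_Lam_pow E n (E.map x)
    have h2 := E.deriv_le_Lam (rep x)
    have h4 := A_pos E n (E.map x)
    have h5 := E_deriv_pos E (rep x)
    rw [A, pow_succ]
    nlinarith

lemma B_bound (E : ExpMap r ℓ) (φ : ℝ → ℝ) (c : ℝ) (hc : ∀ t, |φ t| ≤ c) :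
    ∀ (n : ℕ) (x : 𝕊), |B E φ n x| ≤ c * (A E n x - 1) / (E.lam - 1)
  | 0, x => by simp [B, A]
  | n+1, x => by
    have h1 := B_bound E φ c hc n (E.map x)
    have h2 := hc (rep x)
    have h3 := E.lam_le_deriv (rep x)
    have h4 := E_lam1_pos E
    have h5 := A_one_le E n (E.map x)
    have h6 := E_deriv_pos E (rep x)
    have hc0 : 0 ≤ c := le_trans (abs_nonneg _) (hc 0)
    rw [B, A]
    have habs : |B E φ n (E.map x) * deriv E.toFun (rep x) + φ (rep x)|
        ≤ |B E φ n (E.map x)| * deriv E.toFun (rep x) + c := by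
      calc |B E φ n (E.map x) * deriv E.toFun (rep x) + φ (rep x)|
          ≤ |B E φ n (E.map x) * deriv E.toFun (rep x)| + |φ (rep x)| := abs_add_le _ _
        _ ≤ |B E φ n (E.map x)| * deriv E.toFun (rep x) + c := by
            rw [abs_mul, abs_of_pos h6]; exact add_le_add le_rfl h2
    refine le_trans habs ?_
    have hB' : |B E φ n (E.map x)| * (E.lam - 1) ≤ c * (A E n (E.map x) - 1) :=
      (le_div_iff₀ h4).mp h1
    rw [le_div_iff₀ h4]
    nlinarith [mul_le_mul_of_nonneg_right hB' h6.le,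
      mul_nonneg hc0 (sub_nonneg.mpr (le_trans h3 (le_refl _))),
      mul_nonneg hc0 (sub_nonneg.mpr h3)]

end St5
namespace St5
open Filter Set

variable {r ℓ : ℕ}

/-! ### mulVec and cone lemmas -/

lemma mulVec_eq (a b : ℝ) (u : Fin 2 → ℝ) :
    (!![a, 0; b, 1] : Matrix (Fin 2) (Fin 2) ℝ).mulVec u = ![a * u 0, b * u 0 + u 1] := by
  funext i
  fin_cases i <;>
    simp [Matrix.mulVec, dotProduct, Fin.sum_univ_two]

/-- The explicit inverse image vector. -/
def invVec (a b : ℝ) (v : Fin 2 → ℝ) : Fin 2 → ℝ := ![v 0 / a, v 1 - b * (v 0 / a)]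

lemma mem_image_iff (a b : ℝ) (ha : a ≠ 0) (T : Set (Fin 2 → ℝ)) (v : Fin 2 → ℝ) :
    v ∈ (!![a, 0; b, 1] : Matrix (Fin 2) (Fin 2) ℝ).mulVec '' T ↔ invVec a b v ∈ T := by
  constructor
  · rintro ⟨u, hu, huv⟩
    have h : invVec a b v = u := by
      rw [← huv, mulVec_eq]
      funext i
      fin_cases i <;> simp [invVec] <;> field_simp <;> ring
    rwa [h]
  · intro h
    refine ⟨invVec a b v, h, ?_⟩
    rw [mulVec_eq]
    funext i
    fin_cases i
    · simp [invVec]; field_simp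
    · simp [invVec]

lemma mem_cone_iff (E : ExpMap r ℓ) (R : ℝ) (u : Fin 2 → ℝ) :
    u ∈ E.cone R ↔ |u 1| ≤ R / (E.lam - 1) * |u 0| := Iff.rfl

lemma cone_smul (E : ExpMap r ℓ) (R : ℝ) (c : ℝ) (u : Fin 2 → ℝ) (hu : u ∈ E.cone R) :
    c • u ∈ E.cone R := by
  rw [mem_cone_iff] at *
  simp only [Pi.smul_apply, smul_eq_mul, abs_mul]
  calc |c| * |u 1| ≤ |c| * (R / (E.lam - 1) * |u 0|) :=
        mul_le_mul_of_nonneg_left hu (abs_nonneg c)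
    _ = R / (E.lam - 1) * (|c| * |u 0|) := by ring

/-- Key quantitative cone-mapping lemma: if `d (A'-1) + R ≤ R' A'` then the matrix
`!![A',0;B',1]` with `|B'| ≤ d (A'-1)/(λ-1)` maps `K_R` into `K_{R'}`. -/
lemma cone_map (E : ExpMap r ℓ) {A' B' R R' d : ℝ} (hA : 0 < A')
    (hB : |B'| ≤ d * (A' - 1) / (E.lam - 1))
    (hcond : d * (A' - 1) + R ≤ R' * A')
    (u : Fin 2 → ℝ) (hu : u ∈ E.cone R) :
    (!![A', 0; B', 1] : Matrix (Fin 2) (Fin 2) ℝ).mulVec u ∈ E.cone R' := by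
  have h4 := E_lam1_pos E
  rw [mem_cone_iff] at hu
  rw [mulVec_eq, mem_cone_iff]
  simp only [Matrix.cons_val_zero, Matrix.cons_val_one, Matrix.head_cons]
  have h1 : |B' * u 0 + u 1| ≤ |B'| * |u 0| + |u 1| := by
    calc |B' * u 0 + u 1| ≤ |B' * u 0| + |u 1| := abs_add_le _ _
      _ = |B'| * |u 0| + |u 1| := by rw [abs_mul]
  refine le_trans h1 ?_
  have h2 : |A' * u 0| = A' * |u 0| := by rw [abs_mul, abs_of_pos hA]
  rw [h2]
  have hB2 : |B'| * (E.lam - 1) ≤ d * (A' - 1) := (le_div_iff₀ h4).mp hB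
  have hu2 : |u 1| * (E.lam - 1) ≤ R * |u 0| := by
    have h := hu; rw [div_mul_eq_mul_div, le_div_iff₀ h4] at h; exact h
  rw [div_mul_eq_mul_div, le_div_iff₀ h4]
  nlinarith [mul_le_mul_of_nonneg_right hB2 (abs_nonneg (u 0)), hu2,
    mul_le_mul_of_nonneg_right hcond (abs_nonneg (u 0))]

end St5
namespace St5
open Filter Set

variable {r ℓ : ℕ}

/-! ### Fibers of the expanding map -/

lemma fiber1 (E : ExpMap r ℓ) (y : 𝕊) :
    {x : 𝕊 | E.map x = y}.Finite ∧ {x : 𝕊 | E.map x = y}.ncard ≤ ℓ + 2 := by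
  set c := E.toFun 0 with hc
  set S := {x : 𝕊 | E.map x = y} with hS
  set φ : 𝕊 → ℤ := fun x => ⌊E.toFun (rep x) - rep y⌋ with hφ
  have key : ∀ x ∈ S, (φ x : ℝ) = E.toFun (rep x) - rep y := by
    intro x hx
    have hx' : ((E.toFun (rep x) : ℝ) : 𝕊) = ((rep y : ℝ) : 𝕊) := by
      rw [coe_rep]; exact hx
    rw [QuotientAddGroup.eq_iff_sub_mem] at hx'
    obtain ⟨k, hk⟩ := AddSubgroup.mem_zmultiples_iff.mp hx'
    have hk' : (k : ℝ) = E.toFun (rep x) - rep y := by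
      simpa using hk
    have hfl : φ x = k := by
      simp only [hφ, ← hk', Int.floor_intCast]
    rw [hfl, hk']
  have hinj : Set.InjOn φ S := by
    intro x hx x' hx' hxx
    have e1 := key x hx
    have e2 := key x' hx'
    have : E.toFun (rep x) = E.toFun (rep x') := by
      have : (φ x : ℝ) = (φ x' : ℝ) := by rw [hxx]
      rw [e1, e2] at this; linarith
    exact rep_inj ((E_strictMono E).injective this)
  have hmaps : ∀ x ∈ S, φ x ∈ (Finset.Ioo (⌊c - 1⌋) (⌈c + (ℓ:ℝ)⌉) : Finset ℤ) := by
    intro x hx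
    have e1 := key x hx
    have hrx := rep_mem x
    have hry := rep_mem y
    have h1 : c ≤ E.toFun (rep x) := (E_strictMono E).monotone hrx.1
    have h2 : E.toFun (rep x) < c + ℓ := by
      have := (E_strictMono E) hrx.2
      rw [E_one E] at this; exact this
    rw [Finset.mem_Ioo]
    constructor
    · rw [Int.floor_lt]
      have : c - 1 < E.toFun (rep x) - rep y := by
        have := hry.2; linarith
      rw [← e1] at this; exact_mod_cast this
    · rw [Int.lt_ceil]
      have : E.toFun (rep x) - rep y < c + ℓ := by
        have := hry.1; linarith
      rw [← e1] at this; exact_mod_cast this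
  have himg : φ '' S ⊆ ((Finset.Ioo (⌊c - 1⌋) (⌈c + (ℓ:ℝ)⌉) : Finset ℤ) : Set ℤ) := by
    rintro k ⟨x, hx, rfl⟩
    exact_mod_cast hmaps x hx
  have hfin : S.Finite :=
    Set.Finite.of_finite_image
      (Set.Finite.subset (Finset.finite_toSet _) himg) hinj
  refine ⟨hfin, ?_⟩
  have hcard : ((Finset.Ioo (⌊c - 1⌋) (⌈c + (ℓ:ℝ)⌉) : Finset ℤ) : Set ℤ).ncard ≤ ℓ + 2 := by
    rw [Set.ncard_coe_finset, Int.card_Ioo]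
    have h1 : (⌈c + (ℓ:ℝ)⌉ : ℝ) < c + ℓ + 1 := Int.ceil_lt_add_one _
    have h2 : (c : ℝ) - 1 - 1 < (⌊c - 1⌋ : ℝ) := Int.sub_one_lt_floor _
    have hZ : ⌈c + (ℓ:ℝ)⌉ - ⌊c - 1⌋ - 1 < (ℓ : ℤ) + 2 := by
      have : ((⌈c + (ℓ:ℝ)⌉ - ⌊c - 1⌋ - 1 : ℤ) : ℝ) < (ℓ : ℝ) + 2 := by
        push_cast; linarith
      exact_mod_cast this
    omega
  calc S.ncard ≤ ((Finset.Ioo (⌊c - 1⌋) (⌈c + (ℓ:ℝ)⌉) : Finset ℤ) : Set ℤ).ncard :=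
        Set.ncard_le_ncard_of_injOn φ (fun x hx => himg ⟨x, hx, rfl⟩) hinj
          (Finset.finite_toSet _)
    _ ≤ ℓ + 2 := hcard

end St5
namespace St5
open Filter Set

variable {r ℓ : ℕ}

/-! ### Counting helper -/

lemma ncard_biUnion_le {α β : Type*} {T : Set β} (hT : T.Finite) (F : β → Set α)
    (hF : ∀ w ∈ T, (F w).Finite) (C : ℕ) (hC : ∀ w ∈ T, (F w).ncard ≤ C) :
    (⋃ w ∈ T, F w).Finite ∧ (⋃ w ∈ T, F w).ncard ≤ T.ncard * C := by
  classical
  have hfin : (⋃ w ∈ T, F w).Finite := Set.Finite.biUnion hT hF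
  refine ⟨hfin, ?_⟩
  set G : β → Finset α := fun w => if h : w ∈ T then (hF w h).toFinset else ∅ with hG
  have hunion : (⋃ w ∈ T, F w) = ↑(hT.toFinset.biUnion G) := by
    ext a
    constructor
    · intro ha
      rw [Set.mem_iUnion₂] at ha
      obtain ⟨w, hw, ha⟩ := ha
      rw [Finset.mem_coe, Finset.mem_biUnion]
      exact ⟨w, (Set.Finite.mem_toFinset hT).mpr hw,
        by rw [hG]; simp only [dif_pos hw]; exact (Set.Finite.mem_toFinset _).mpr ha⟩
    · intro ha
      rw [Finset.mem_coe, Finset.mem_biUnion] at ha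
      obtain ⟨w, hw, ha⟩ := ha
      rw [Set.Finite.mem_toFinset hT] at hw
      rw [Set.mem_iUnion₂]
      refine ⟨w, hw, ?_⟩
      rw [hG] at ha; simp only [dif_pos hw] at ha
      exact (Set.Finite.mem_toFinset _).mp ha
  rw [hunion, Set.ncard_coe_finset]
  calc (hT.toFinset.biUnion G).card ≤ hT.toFinset.card * C := by
        apply Finset.card_biUnion_le_card_mul
        intro w hw
        rw [Set.Finite.mem_toFinset] at hw
        simp only [hG, dif_pos hw]
        rw [← Set.ncard_eq_toFinset_card _ (hF w hw)]
        exact hC w hw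
    _ = T.ncard * C := by rw [Set.ncard_eq_toFinset_card _ hT]

/-! ### Iterated fibers -/

lemma fibern (E : ExpMap r ℓ) :
    ∀ (n : ℕ) (y : 𝕊), {x : 𝕊 | (E.map)^[n] x = y}.Finite ∧
      {x : 𝕊 | (E.map)^[n] x = y}.ncard ≤ (ℓ + 2) ^ n
  | 0, y => by
    constructor
    · simpa using Set.finite_singleton y
    · simpa using le_refl 1
  | n+1, y => by
    obtain ⟨hfin, hcard⟩ := fibern E n y
    have hdecomp : {x : 𝕊 | (E.map)^[n+1] x = y}
        = ⋃ y' ∈ {x : 𝕊 | (E.map)^[n] x = y}, {x : 𝕊 | E.map x = y'} := by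
      ext x
      simp only [Set.mem_setOf_eq, Set.mem_iUnion, Function.iterate_succ_apply]
      constructor
      · intro h; exact ⟨E.map x, h, rfl⟩
      · rintro ⟨y', h1, h2⟩; rw [h2]; exact h1
    obtain ⟨hf, hc⟩ := ncard_biUnion_le hfin (fun y' => {x : 𝕊 | E.map x = y'})
      (fun y' _ => (fiber1 E y').1) (ℓ + 2) (fun y' _ => (fiber1 E y').2)
    rw [hdecomp]
    refine ⟨hf, le_trans hc ?_⟩
    rw [pow_succ]
    exact Nat.mul_le_mul_right _ hcard

/-! ### Skew product structure -/

/-- The accumulated vertical shift of `skew^[n]` over `x`. -/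
def shift (E : ExpMap r ℓ) {s : ℕ∞} (σ : CrFun s) : ℕ → 𝕊 → 𝕊
  | 0, _ => 0
  | n+1, x => ((σ.toFun (rep x) : ℝ) : 𝕊) + shift E σ n (E.map x)

lemma skew_iter (E : ExpMap r ℓ) {s : ℕ∞} (σ : CrFun s) :
    ∀ (n : ℕ) (ζ : 𝕊 × 𝕊),
      (skew E σ)^[n] ζ = ((E.map)^[n] ζ.1, ζ.2 + shift E σ n ζ.1)
  | 0, ζ => by simp [shift]
  | n+1, ζ => by
    rw [Function.iterate_succ_apply, skew_iter E σ n (skew E σ ζ),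
      Function.iterate_succ_apply]
    show ((E.map)^[n] (E.map ζ.1), (ζ.2 + _) + shift E σ n (E.map ζ.1)) = _
    rw [add_assoc]
    rfl

lemma skew_fiber (E : ExpMap r ℓ) {s : ℕ∞} (σ : CrFun s) (n : ℕ) (z : 𝕊 × 𝕊) :
    {ζ : 𝕊 × 𝕊 | (skew E σ)^[n] ζ = z}.Finite ∧
      {ζ : 𝕊 × 𝕊 | (skew E σ)^[n] ζ = z}.ncard ≤ (ℓ + 2) ^ n := by
  set S := {ζ : 𝕊 × 𝕊 | (skew E σ)^[n] ζ = z} with hS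
  have hmaps : ∀ ζ ∈ S, ζ.1 ∈ {x : 𝕊 | (E.map)^[n] x = z.1} := by
    intro ζ hζ
    have := congrArg Prod.fst hζ
    rwa [skew_iter] at this
  have hinj : Set.InjOn Prod.fst S := by
    intro ζ hζ ζ' hζ' h
    have h1 : ζ.2 + shift E σ n ζ.1 = z.2 := by
      have := congrArg Prod.snd hζ; rwa [skew_iter] at this
    have h2 : ζ'.2 + shift E σ n ζ'.1 = z.2 := by
      have := congrArg Prod.snd hζ'; rwa [skew_iter] at this
    rw [← h] at h2
    have : ζ.2 = ζ'.2 := by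
      have := h1.trans h2.symm
      exact add_right_cancel this
    exact Prod.ext h this
  obtain ⟨hfin, hcard⟩ := fibern E n z.1
  constructor
  · exact Set.Finite.of_finite_image
      (Set.Finite.subset hfin (by rintro x ⟨ζ, hζ, rfl⟩; exact hmaps ζ hζ)) hinj
  · exact le_trans (Set.ncard_le_ncard_of_injOn Prod.fst hmaps hinj hfin) hcard

end St5
namespace St5
open Filter Set

variable {r ℓ : ℕ}

/-! ### dsup basics -/

lemma deriv_periodic {s : ℕ∞} (σ : CrFun s) :
    Function.Periodic (deriv σ.toFun) 1 := by
  intro x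
  have hfun : (fun y => σ.toFun (y + 1)) = σ.toFun := funext σ.periodic
  calc deriv σ.toFun (x + 1) = deriv (fun y => σ.toFun (y + 1)) x :=
        (deriv_comp_add_const σ.toFun 1 x).symm
    _ = deriv σ.toFun x := by rw [hfun]

lemma deriv_cont {s : ℕ∞} (σ : CrFun s) (hs : 1 ≤ s) : Continuous (deriv σ.toFun) :=
  σ.contDiff.continuous_deriv (by exact_mod_cast hs)

lemma dsup_bddAbove {s : ℕ∞} (σ : CrFun s) (hs : 1 ≤ s) :
    BddAbove ((fun x => |deriv σ.toFun x|) '' Set.Icc (0:ℝ) 1) :=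
  (isCompact_Icc.image ((deriv_cont σ hs).abs)).bddAbove

lemma abs_deriv_le_dsup {s : ℕ∞} (σ : CrFun s) (hs : 1 ≤ s) (t : ℝ) :
    |deriv σ.toFun t| ≤ σ.dsup := by
  have hper : |deriv σ.toFun (Int.fract t)| = |deriv σ.toFun t| := by
    congr 1
    unfold Int.fract
    have := (deriv_periodic σ).sub_zsmul_eq (x := t) ⌊t⌋
    simpa using this
  rw [← hper]
  apply le_csSup (dsup_bddAbove σ hs)
  exact ⟨Int.fract t, ⟨Int.fract_nonneg t, (Int.fract_lt_one t).le⟩, rfl⟩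

lemma dsup_nonneg {s : ℕ∞} (σ : CrFun s) (hs : 1 ≤ s) : 0 ≤ σ.dsup :=
  le_trans (abs_nonneg _) (abs_deriv_le_dsup σ hs 0)

lemma dsup_le {s : ℕ∞} (σ : CrFun s) (c : ℝ) (hc : ∀ t ∈ Set.Icc (0:ℝ) 1, |deriv σ.toFun t| ≤ c) :
    σ.dsup ≤ c := by
  apply csSup_le
  · exact ⟨|deriv σ.toFun 0|, ⟨0, ⟨le_refl 0, zero_le_one⟩, rfl⟩⟩
  · rintro y ⟨t, ht, rfl⟩; exact hc t ht

/-! ### nQ basics -/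

/-- The counting set of `nQ`. -/
def cnt (E : ExpMap r ℓ) {s : ℕ∞} (σ : CrFun s) (R : ℝ) (n : ℕ) (z : 𝕊 × 𝕊)
    (v : Fin 2 → ℝ) : Set (𝕊 × 𝕊) :=
  {ζ : 𝕊 × 𝕊 | (skew E σ)^[n] ζ = z ∧ v ∈ (Jacn E σ n ζ).mulVec '' E.cone R}

lemma nQ_eq (E : ExpMap r ℓ) {s : ℕ∞} (σ : CrFun s) (R : ℝ) (n : ℕ) :
    nQ E σ R n = sSup {c : ℝ | ∃ (z : 𝕊 × 𝕊) (v : Fin 2 → ℝ), IsUnitVec v ∧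
      c = ((cnt E σ R n z v).ncard : ℝ)} := rfl

lemma cnt_finite (E : ExpMap r ℓ) {s : ℕ∞} (σ : CrFun s) (R : ℝ) (n : ℕ)
    (z : 𝕊 × 𝕊) (v : Fin 2 → ℝ) :
    (cnt E σ R n z v).Finite ∧ (cnt E σ R n z v).ncard ≤ (ℓ + 2) ^ n := by
  obtain ⟨h1, h2⟩ := skew_fiber E σ n z
  constructor
  · exact h1.subset (fun ζ hζ => hζ.1)
  · exact le_trans (Set.ncard_le_ncard (fun ζ hζ => hζ.1) h1) h2

lemma setNQ_nonempty (E : ExpMap r ℓ) {s : ℕ∞} (σ : CrFun s) (R : ℝ) (n : ℕ) :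
    {c : ℝ | ∃ (z : 𝕊 × 𝕊) (v : Fin 2 → ℝ), IsUnitVec v ∧
      c = ((cnt E σ R n z v).ncard : ℝ)}.Nonempty := by
  refine ⟨_, ((0:𝕊),(0:𝕊)), ![1,0], ?_, rfl⟩
  show (1:ℝ)^2 + (0:ℝ)^2 = 1
  norm_num

lemma setNQ_bddAbove (E : ExpMap r ℓ) {s : ℕ∞} (σ : CrFun s) (R : ℝ) (n : ℕ) :
    BddAbove {c : ℝ | ∃ (z : 𝕊 × 𝕊) (v : Fin 2 → ℝ), IsUnitVec v ∧
      c = ((cnt E σ R n z v).ncard : ℝ)} := by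
  refine ⟨((ℓ + 2) ^ n : ℕ), ?_⟩
  rintro c ⟨z, v, hv, rfl⟩
  exact_mod_cast (cnt_finite E σ R n z v).2

lemma cnt_le_nQ (E : ExpMap r ℓ) {s : ℕ∞} (σ : CrFun s) (R : ℝ) (n : ℕ)
    (z : 𝕊 × 𝕊) (v : Fin 2 → ℝ) (hv : IsUnitVec v) :
    ((cnt E σ R n z v).ncard : ℝ) ≤ nQ E σ R n := by
  rw [nQ_eq]
  exact le_csSup (setNQ_bddAbove E σ R n) ⟨z, v, hv, rfl⟩

lemma nQ_le (E : ExpMap r ℓ) {s : ℕ∞} (σ : CrFun s) (R : ℝ) (n : ℕ) (M : ℝ)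
    (hM : ∀ (z : 𝕊 × 𝕊) (v : Fin 2 → ℝ), IsUnitVec v → ((cnt E σ R n z v).ncard : ℝ) ≤ M) :
    nQ E σ R n ≤ M := by
  rw [nQ_eq]
  apply csSup_le (setNQ_nonempty E σ R n)
  rintro c ⟨z, v, hv, rfl⟩
  exact hM z v hv

lemma nQ_nonneg (E : ExpMap r ℓ) {s : ℕ∞} (σ : CrFun s) (R : ℝ) (n : ℕ) :
    0 ≤ nQ E σ R n := by
  refine le_trans ?_ (cnt_le_nQ E σ R n ((0:𝕊),(0:𝕊)) ![1,0] ?_)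
  · positivity
  · show (1:ℝ)^2 + (0:ℝ)^2 = 1; norm_num

lemma nQ_le_pow (E : ExpMap r ℓ) {s : ℕ∞} (σ : CrFun s) (R : ℝ) (n : ℕ) :
    nQ E σ R n ≤ ((ℓ + 2 : ℕ) : ℝ) ^ n := by
  apply nQ_le
  intro z v _
  have := (cnt_finite E σ R n z v).2
  have h2 : ((cnt E σ R n z v).ncard : ℝ) ≤ (((ℓ + 2) ^ n : ℕ) : ℝ) := by exact_mod_cast this
  simpa using h2

lemma nQ_one_le (E : ExpMap r ℓ) {s : ℕ∞} (σ : CrFun s) (R : ℝ) (hR : 0 ≤ R) (n : ℕ) :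
    1 ≤ nQ E σ R n := by
  classical
  set x₀ : 𝕊 := 0
  set ζ₀ : 𝕊 × 𝕊 := (x₀, (0:𝕊))
  set a := A E n x₀ with ha
  set b := B E (deriv σ.toFun) n x₀ with hb
  have hapos : 0 < a := A_pos E n x₀
  set nrm := Real.sqrt (a^2 + b^2) with hnrm
  have hnpos : 0 < nrm := Real.sqrt_pos.mpr (by positivity)
  set v : Fin 2 → ℝ := ![a / nrm, b / nrm] with hv
  have hunit : IsUnitVec v := by
    show (a / nrm)^2 + (b / nrm)^2 = 1
    rw [div_pow, div_pow, ← add_div, hnrm, Real.sq_sqrt (by positivity)]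
    field_simp
  have hmem : v ∈ (Jacn E σ n ζ₀).mulVec '' E.cone R := by
    refine ⟨![nrm⁻¹, 0], ?_, ?_⟩
    · rw [mem_cone_iff]
      simp only [Matrix.cons_val_one, Matrix.head_cons, Matrix.cons_val_zero]
      rw [abs_zero]
      exact mul_nonneg (div_nonneg hR (E_lam1_pos E).le) (abs_nonneg _)
    · rw [jacn_eq, mulVec_eq]
      show (![a * nrm⁻¹, b * nrm⁻¹ + 0] : Fin 2 → ℝ) = v
      funext i
      fin_cases i <;> simp [hv] <;> field_simp
  set z := (skew E σ)^[n] ζ₀ with hz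
  have hζ : ζ₀ ∈ cnt E σ R n z v := ⟨rfl, hmem⟩
  have hfin := (cnt_finite E σ R n z v).1
  have hpos : 0 < (cnt E σ R n z v).ncard := (Set.ncard_pos hfin).mpr ⟨ζ₀, hζ⟩
  calc (1:ℝ) ≤ ((cnt E σ R n z v).ncard : ℝ) := by exact_mod_cast hpos
    _ ≤ nQ E σ R n := cnt_le_nQ E σ R n z v hunit

end St5
namespace St5
open Filter Set

variable {r ℓ : ℕ}

/-! ### Jacobian composition and cone invariance -/

lemma jacn_add (E : ExpMap r ℓ) {s : ℕ∞} (σ : CrFun s) (n : ℕ) :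
    ∀ (m : ℕ) (ζ : 𝕊 × 𝕊),
      Jacn E σ (n + m) ζ = Jacn E σ n ((skew E σ)^[m] ζ) * Jacn E σ m ζ
  | 0, ζ => by simp [Jacn]
  | m+1, ζ => by
    show Jacn E σ ((n + m) + 1) ζ = _
    rw [Jacn, jacn_add E σ n m (skew E σ ζ), Function.iterate_succ_apply,
      show Jacn E σ (m+1) ζ = Jacn E σ m (skew E σ ζ) * Jac1 E σ ζ.1 from rfl,
      Matrix.mul_assoc]

lemma mulVec_inj (a b : ℝ) (ha : a ≠ 0) (u v : Fin 2 → ℝ)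
    (h : (!![a, 0; b, 1] : Matrix (Fin 2) (Fin 2) ℝ).mulVec u = v) :
    u = invVec a b v := by
  rw [← h, mulVec_eq]
  funext i
  fin_cases i <;> simp [invVec] <;> field_simp <;> ring

/-- Cone invariance: `Df^n` maps `K_{‖σ'‖+1}` into itself. -/
lemma jacn_cone_inv (E : ExpMap r ℓ) {s : ℕ∞} (σ : CrFun s) (hs : 1 ≤ s)
    (n : ℕ) (ζ : 𝕊 × 𝕊) (u : Fin 2 → ℝ) (hu : u ∈ E.cone (σ.dsup + 1)) :
    (Jacn E σ n ζ).mulVec u ∈ E.cone (σ.dsup + 1) := by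
  rw [jacn_eq]
  apply cone_map E (A_pos E n ζ.1)
    (B_bound E (deriv σ.toFun) σ.dsup (abs_deriv_le_dsup σ hs) n ζ.1) _ u hu
  have h1 := A_one_le E n ζ.1
  have h2 := dsup_nonneg σ hs
  nlinarith

/-- Cone contraction: once `λ^n ≥ 2`, `Df^n` maps the bigger cone `K_{‖σ'‖+2}`
into `K_{‖σ'‖+1}`. -/
lemma jacn_cone_contract (E : ExpMap r ℓ) {s : ℕ∞} (σ : CrFun s) (hs : 1 ≤ s)
    (n : ℕ) (h2 : (2:ℝ) ≤ E.lam ^ n) (ζ : 𝕊 × 𝕊) (u : Fin 2 → ℝ)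
    (hu : u ∈ E.cone (σ.dsup + 2)) :
    (Jacn E σ n ζ).mulVec u ∈ E.cone (σ.dsup + 1) := by
  rw [jacn_eq]
  apply cone_map E (A_pos E n ζ.1)
    (B_bound E (deriv σ.toFun) σ.dsup (abs_deriv_le_dsup σ hs) n ζ.1) _ u hu
  have h1 := le_trans h2 (lam_pow_le_A E n ζ.1)
  have h3 := dsup_nonneg σ hs
  nlinarith

end St5
namespace St5
open Filter Set

variable {r ℓ : ℕ}

/-! ### Real-valued counting helper -/

lemma ncard_biUnion_le_real {α β : Type*} {T : Set β} (hT : T.Finite) (F : β → Set α)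
    (hF : ∀ w ∈ T, (F w).Finite) (M : ℝ) (hM : ∀ w ∈ T, ((F w).ncard : ℝ) ≤ M) :
    ((⋃ w ∈ T, F w).ncard : ℝ) ≤ (T.ncard : ℝ) * M := by
  classical
  rcases T.eq_empty_or_nonempty with hTe | hTne
  · subst hTe; simp
  have hM0 : 0 ≤ M := by
    obtain ⟨w, hw⟩ := hTne
    exact le_trans (Nat.cast_nonneg _) (hM w hw)
  set G : β → Finset α := fun w => if h : w ∈ T then (hF w h).toFinset else ∅ with hG
  have hunion : (⋃ w ∈ T, F w) = ↑(hT.toFinset.biUnion G) := by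
    ext a
    constructor
    · intro ha
      rw [Set.mem_iUnion₂] at ha
      obtain ⟨w, hw, ha⟩ := ha
      rw [Finset.mem_coe, Finset.mem_biUnion]
      exact ⟨w, (Set.Finite.mem_toFinset hT).mpr hw,
        by rw [hG]; simp only [dif_pos hw]; exact (Set.Finite.mem_toFinset _).mpr ha⟩
    · intro ha
      rw [Finset.mem_coe, Finset.mem_biUnion] at ha
      obtain ⟨w, hw, ha⟩ := ha
      rw [Set.Finite.mem_toFinset hT] at hw
      rw [Set.mem_iUnion₂]
      refine ⟨w, hw, ?_⟩
      rw [hG] at ha; simp only [dif_pos hw] at ha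
      exact (Set.Finite.mem_toFinset _).mp ha
  rw [hunion, Set.ncard_coe_finset]
  calc ((hT.toFinset.biUnion G).card : ℝ)
      ≤ ((∑ w ∈ hT.toFinset, (G w).card : ℕ) : ℝ) := by
        exact_mod_cast Finset.card_biUnion_le
    _ = ∑ w ∈ hT.toFinset, ((G w).card : ℝ) := by push_cast; rfl
    _ ≤ ∑ _w ∈ hT.toFinset, M := by
        apply Finset.sum_le_sum
        intro w hw
        rw [Set.Finite.mem_toFinset] at hw
        simp only [hG, dif_pos hw]
        rw [← Set.ncard_eq_toFinset_card _ (hF w hw)]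
        exact hM w hw
    _ = (hT.toFinset.card : ℝ) * M := by rw [Finset.sum_const, nsmul_eq_mul]
    _ = (T.ncard : ℝ) * M := by rw [Set.ncard_eq_toFinset_card _ hT]

/-! ### Submultiplicativity -/

lemma nQ_submul (E : ExpMap r ℓ) {s : ℕ∞} (σ : CrFun s) (hs : 1 ≤ s) (n m : ℕ) :
    nQ E σ (σ.dsup + 1) (n + m) ≤ nQ E σ (σ.dsup + 1) n * nQ E σ (σ.dsup + 1) m := by
  set R := σ.dsup + 1 with hR
  apply nQ_le
  intro z v hv
  have hvne : v ≠ 0 := by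
    intro h0
    have : (0:ℝ) = 1 := by
      have := hv
      rw [h0] at this
      simpa [IsUnitVec] using this.symm
    norm_num at this
  -- the intermediate-point set
  set T := cnt E σ R m z v with hT
  have hTfin := (cnt_finite E σ R m z v).1
  -- the normalized pulled-back vector at w
  set wv : 𝕊 × 𝕊 → (Fin 2 → ℝ) := fun w =>
    invVec (A E m w.1) (B E (deriv σ.toFun) m w.1) v with hwv
  set uv : 𝕊 × 𝕊 → (Fin 2 → ℝ) := fun w =>
    (Real.sqrt ((wv w 0)^2 + (wv w 1)^2))⁻¹ • wv w with huv
  -- basic facts for w ∈ T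
  have hwv_ne : ∀ w ∈ T, wv w ≠ 0 := by
    intro w hw h0
    obtain ⟨_, u, hu, hum⟩ := hw
    have heq : u = wv w := by
      apply mulVec_inj _ _ (ne_of_gt (A_pos E m w.1))
      rw [← jacn_eq]; exact hum
    have : v = 0 := by
      rw [← hum, heq, h0]
      rw [jacn_eq, mulVec_eq]
      funext i; fin_cases i <;> simp
    exact hvne this
  have hnrm_pos : ∀ w ∈ T, 0 < Real.sqrt ((wv w 0)^2 + (wv w 1)^2) := by
    intro w hw
    apply Real.sqrt_pos.mpr
    by_contra hns
    push_neg at hns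
    have h00 : wv w 0 = 0 ∧ wv w 1 = 0 := by
      constructor <;> nlinarith [sq_nonneg (wv w 0), sq_nonneg (wv w 1)]
    apply hwv_ne w hw
    funext i; fin_cases i
    · exact h00.1
    · exact h00.2
  have huv_unit : ∀ w ∈ T, IsUnitVec (uv w) := by
    intro w hw
    have hp := hnrm_pos w hw
    show ((Real.sqrt _)⁻¹ • wv w) 0 ^ 2 + ((Real.sqrt _)⁻¹ • wv w) 1 ^ 2 = 1
    simp only [Pi.smul_apply, smul_eq_mul]
    have hsq : (Real.sqrt ((wv w 0)^2 + (wv w 1)^2))^2 = (wv w 0)^2 + (wv w 1)^2 :=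
      Real.sq_sqrt (by positivity)
    have hx : ((wv w 0)^2 + (wv w 1)^2) ≠ 0 := ne_of_gt (Real.sqrt_pos.mp hp)
    field_simp
    exact hsq.symm
  -- main inclusion
  have hsub : cnt E σ R (n + m) z v ⊆ ⋃ w ∈ T, cnt E σ R n w (uv w) := by
    intro ζ hζ
    obtain ⟨hfib, u, hu, hum⟩ := hζ
    set w := (skew E σ)^[n] ζ with hw
    have hwfib : (skew E σ)^[m] w = z := by
      rw [hw, ← Function.iterate_add_apply, Nat.add_comm m n]
      exact hfib
    have hdecomp : Jacn E σ (n + m) ζ = Jacn E σ m w * Jacn E σ n ζ := by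
      rw [Nat.add_comm n m]
      exact jacn_add E σ m n ζ
    have hinner : (Jacn E σ n ζ).mulVec u ∈ E.cone R := jacn_cone_inv E σ hs n ζ u hu
    have hvw : (Jacn E σ m w).mulVec ((Jacn E σ n ζ).mulVec u) = v := by
      rw [Matrix.mulVec_mulVec, ← hdecomp]; exact hum
    have hwT : w ∈ T := ⟨hwfib, (Jacn E σ n ζ).mulVec u, hinner, hvw⟩
    have hinner_eq : (Jacn E σ n ζ).mulVec u = wv w := by
      apply mulVec_inj _ _ (ne_of_gt (A_pos E m w.1))
      rw [← jacn_eq]; exact hvw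
    rw [Set.mem_iUnion₂]
    refine ⟨w, hwT, rfl, (Real.sqrt ((wv w 0)^2 + (wv w 1)^2))⁻¹ • u,
      cone_smul E R _ u hu, ?_⟩
    rw [Matrix.mulVec_smul, hinner_eq]
  -- counting
  have hcnt_fin : ∀ w ∈ T, (cnt E σ R n w (uv w)).Finite :=
    fun w _ => (cnt_finite E σ R n w (uv w)).1
  have hM : ∀ w ∈ T, ((cnt E σ R n w (uv w)).ncard : ℝ) ≤ nQ E σ R n :=
    fun w hw => cnt_le_nQ E σ R n w (uv w) (huv_unit w hw)
  have hUfin : (⋃ w ∈ T, cnt E σ R n w (uv w)).Finite :=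
    Set.Finite.biUnion hTfin hcnt_fin
  calc ((cnt E σ R (n + m) z v).ncard : ℝ)
      ≤ ((⋃ w ∈ T, cnt E σ R n w (uv w)).ncard : ℝ) := by
        exact_mod_cast Set.ncard_le_ncard hsub hUfin
    _ ≤ (T.ncard : ℝ) * nQ E σ R n := ncard_biUnion_le_real hTfin _ hcnt_fin _ hM
    _ ≤ nQ E σ R m * nQ E σ R n := by
        apply mul_le_mul_of_nonneg_right _ (nQ_nonneg E σ R n)
        exact cnt_le_nQ E σ R m z v hv
    _ = nQ E σ R n * nQ E σ R m := mul_comm _ _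

end St5
namespace St5
open Filter Set

variable {r ℓ : ℕ}

/-! ### Independence of the cone parameter (one inequality) -/

lemma nQ_Rchange (E : ExpMap r ℓ) {s : ℕ∞} (σ : CrFun s) (hs : 1 ≤ s)
    (m₀ : ℕ) (h2 : (2:ℝ) ≤ E.lam ^ m₀) (n : ℕ) :
    nQ E σ (σ.dsup + 2) (n + m₀) ≤ (((ℓ + 2) ^ m₀ : ℕ) : ℝ) * nQ E σ (σ.dsup + 1) n := by
  apply nQ_le
  intro z v hv
  set T := cnt E σ (σ.dsup + 1) n z v with hT
  have hTfin := (cnt_finite E σ (σ.dsup + 1) n z v).1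
  have hsub : cnt E σ (σ.dsup + 2) (n + m₀) z v
      ⊆ ⋃ w ∈ T, {ζ : 𝕊 × 𝕊 | (skew E σ)^[m₀] ζ = w} := by
    intro ζ hζ
    obtain ⟨hfib, u, hu, hum⟩ := hζ
    set w := (skew E σ)^[m₀] ζ with hw
    have hwfib : (skew E σ)^[n] w = z := by
      rw [hw, ← Function.iterate_add_apply]
      exact hfib
    have hdecomp : Jacn E σ (n + m₀) ζ = Jacn E σ n w * Jacn E σ m₀ ζ :=
      jacn_add E σ n m₀ ζ
    have hinner : (Jacn E σ m₀ ζ).mulVec u ∈ E.cone (σ.dsup + 1) :=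
      jacn_cone_contract E σ hs m₀ h2 ζ u hu
    have hvw : (Jacn E σ n w).mulVec ((Jacn E σ m₀ ζ).mulVec u) = v := by
      rw [Matrix.mulVec_mulVec, ← hdecomp]; exact hum
    have hwT : w ∈ T := ⟨hwfib, (Jacn E σ m₀ ζ).mulVec u, hinner, hvw⟩
    rw [Set.mem_iUnion₂]
    exact ⟨w, hwT, rfl⟩
  have hUfin : (⋃ w ∈ T, {ζ : 𝕊 × 𝕊 | (skew E σ)^[m₀] ζ = w}).Finite :=
    Set.Finite.biUnion hTfin (fun w _ => (skew_fiber E σ m₀ w).1)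
  calc ((cnt E σ (σ.dsup + 2) (n + m₀) z v).ncard : ℝ)
      ≤ ((⋃ w ∈ T, {ζ : 𝕊 × 𝕊 | (skew E σ)^[m₀] ζ = w}).ncard : ℝ) := by
        exact_mod_cast Set.ncard_le_ncard hsub hUfin
    _ ≤ (T.ncard : ℝ) * (((ℓ + 2) ^ m₀ : ℕ) : ℝ) := by
        apply ncard_biUnion_le_real hTfin _ (fun w _ => (skew_fiber E σ m₀ w).1)
        intro w _
        exact_mod_cast (skew_fiber E σ m₀ w).2
    _ ≤ nQ E σ (σ.dsup + 1) n * (((ℓ + 2) ^ m₀ : ℕ) : ℝ) := by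
        apply mul_le_mul_of_nonneg_right _ (by positivity)
        exact cnt_le_nQ E σ (σ.dsup + 1) n z v hv
    _ = (((ℓ + 2) ^ m₀ : ℕ) : ℝ) * nQ E σ (σ.dsup + 1) n := mul_comm _ _

end St5
namespace St5
open Filter Set

variable {r ℓ : ℕ}

/-! ### Comparison between nearby cocycles -/

lemma B_sub (E : ExpMap r ℓ) (φ ψ : ℝ → ℝ) :
    ∀ (n : ℕ) (x : 𝕊), B E φ n x - B E ψ n x = B E (fun t => φ t - ψ t) n x
  | 0, x => by simp [B]
  | n+1, x => by
    simp only [B]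
    rw [← B_sub E φ ψ n (E.map x)]
    ring

/-- If `σ` is `C¹`-close to `τ` (and the closeness is small compared with `Λ^n`), then each
count for `σ` at cone parameter `‖σ'‖+1` is dominated by a count for `τ` at parameter
`‖τ'‖+2`. -/
lemma nQ_compare (E : ExpMap r ℓ) {s : ℕ∞} (τ σ : CrFun s) (hs : 1 ≤ s)
    (n : ℕ) (e : ℝ) (he0 : 0 ≤ e)
    (hd : ∀ t : ℝ, |deriv σ.toFun t - deriv τ.toFun t| ≤ e)
    (hdsup : σ.dsup ≤ τ.dsup + e)
    (he : e * E.Lam ^ n ≤ 1) :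
    nQ E σ (σ.dsup + 1) n ≤ nQ E τ (τ.dsup + 2) n := by
  apply nQ_le
  intro z v hv
  set φmap : 𝕊 × 𝕊 → 𝕊 × 𝕊 := fun ζ => (ζ.1, z.2 - shift E τ n ζ.1) with hφmap
  have hmaps : ∀ ζ ∈ cnt E σ (σ.dsup + 1) n z v,
      φmap ζ ∈ cnt E τ (τ.dsup + 2) n z v := by
    rintro ζ ⟨hfib, u, hu, hum⟩
    have hfst : (E.map)^[n] ζ.1 = z.1 := by
      have := congrArg Prod.fst hfib
      rwa [skew_iter] at this
    constructor
    · rw [skew_iter]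
      show ((E.map)^[n] ζ.1, (z.2 - shift E τ n ζ.1) + shift E τ n ζ.1) = z
      rw [sub_add_cancel, hfst]
    · -- the cone image inclusion
      set x := ζ.1 with hx
      set Δ := B E (deriv σ.toFun) n x - B E (deriv τ.toFun) n x with hΔ
      set u' : Fin 2 → ℝ := ![u 0, Δ * u 0 + u 1] with hu'
      have hΔ_bound : |Δ| ≤ e * (A E n x - 1) / (E.lam - 1) := by
        rw [hΔ, B_sub]
        exact B_bound E _ e (fun t => hd t) n x
      have hu'mem : u' ∈ E.cone (τ.dsup + 2) := by
        rw [mem_cone_iff] at hu ⊢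
        have h1 : |u' 1| ≤ |Δ| * |u 0| + |u 1| := by
          show |Δ * u 0 + u 1| ≤ _
          calc |Δ * u 0 + u 1| ≤ |Δ * u 0| + |u 1| := abs_add_le _ _
            _ = |Δ| * |u 0| + |u 1| := by rw [abs_mul]
        have hA1 := A_one_le E n x
        have hAΛ := A_le_Lam_pow E n x
        have hlam1 := E_lam1_pos E
        have hΔ2 : |Δ| * (E.lam - 1) ≤ e * (A E n x - 1) := (le_div_iff₀ hlam1).mp hΔ_bound
        have hu2 : |u 1| * (E.lam - 1) ≤ (σ.dsup + 1) * |u 0| := by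
          have h := hu; rw [div_mul_eq_mul_div, le_div_iff₀ hlam1] at h; exact h
        show |u' 1| ≤ (τ.dsup + 2) / (E.lam - 1) * |u' 0|
        have hu'0 : u' 0 = u 0 := rfl
        rw [hu'0, div_mul_eq_mul_div, le_div_iff₀ hlam1]
        have key : e * (A E n x - 1) ≤ 1 - e := by
          have hΛpos : (0:ℝ) < E.Lam ^ n := by
            have : (0:ℝ) < E.Lam :=
              lt_of_lt_of_le (lt_trans one_pos E.one_lt_lam) E.lam_le_Lam
            positivity
          nlinarith [mul_le_mul_of_nonneg_left hAΛ he0]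
        nlinarith [mul_le_mul_of_nonneg_right hΔ2 (abs_nonneg (u 0)),
          mul_le_mul_of_nonneg_right key (abs_nonneg (u 0)),
          mul_le_mul_of_nonneg_right hdsup (abs_nonneg (u 0)),
          h1, hu2, abs_nonneg (u 0)]
      refine ⟨u', hu'mem, ?_⟩
      rw [jacn_eq, mulVec_eq]
      have := hum
      rw [jacn_eq, mulVec_eq] at this
      rw [← this]
      show (![A E n x * u' 0, B E (deriv τ.toFun) n x * u' 0 + u' 1] : Fin 2 → ℝ) = _
      funext i
      fin_cases i
      · rfl
      · show B E (deriv τ.toFun) n x * u' 0 + u' 1 = B E (deriv σ.toFun) n x * u 0 + u 1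
        have h0 : u' 0 = u 0 := rfl
        have h1 : u' 1 = Δ * u 0 + u 1 := rfl
        rw [h0, h1, hΔ]
        ring
  have hinj : Set.InjOn φmap (cnt E σ (σ.dsup + 1) n z v) := by
    rintro ζ hζ ζ' hζ' h
    have h1 : ζ.1 = ζ'.1 := by have := congrArg Prod.fst h; exact this
    have e1 : ζ.2 + shift E σ n ζ.1 = z.2 := by
      have := congrArg Prod.snd hζ.1; rwa [skew_iter] at this
    have e2 : ζ'.2 + shift E σ n ζ'.1 = z.2 := by
      have := congrArg Prod.snd hζ'.1; rwa [skew_iter] at this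
    rw [← h1] at e2
    exact Prod.ext h1 (add_right_cancel (e1.trans e2.symm))
  have htfin := (cnt_finite E τ (τ.dsup + 2) n z v).1
  calc ((cnt E σ (σ.dsup + 1) n z v).ncard : ℝ)
      ≤ ((cnt E τ (τ.dsup + 2) n z v).ncard : ℝ) := by
        exact_mod_cast Set.ncard_le_ncard_of_injOn φmap hmaps hinj htfin
    _ ≤ nQ E τ (τ.dsup + 2) n := cnt_le_nQ E τ (τ.dsup + 2) n z v hv

end St5
namespace St5
open Filter Set

variable {r ℓ : ℕ}

/-! ### Fekete machinery for `nlim` -/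

lemma nQ_pos (E : ExpMap r ℓ) {s : ℕ∞} (σ : CrFun s) (hs : 1 ≤ s) (n : ℕ) :
    0 < nQ E σ (σ.dsup + 1) n :=
  lt_of_lt_of_le one_pos
    (nQ_one_le E σ (σ.dsup + 1) (by linarith [dsup_nonneg σ hs]) n)

/-- The log counting sequence. -/
def useq (E : ExpMap r ℓ) {s : ℕ∞} (σ : CrFun s) (n : ℕ) : ℝ :=
  Real.log (nQ E σ (σ.dsup + 1) n)

lemma useq_subadd (E : ExpMap r ℓ) {s : ℕ∞} (σ : CrFun s) (hs : 1 ≤ s) :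
    Subadditive (useq E σ) := by
  intro a b
  have h1 := nQ_submul E σ hs a b
  have h2 := nQ_pos E σ hs a
  have h3 := nQ_pos E σ hs b
  calc useq E σ (a + b) ≤ Real.log (nQ E σ (σ.dsup + 1) a * nQ E σ (σ.dsup + 1) b) :=
        Real.log_le_log (nQ_pos E σ hs _) h1
    _ = useq E σ a + useq E σ b := Real.log_mul (ne_of_gt h2) (ne_of_gt h3)

lemma useq_nonneg (E : ExpMap r ℓ) {s : ℕ∞} (σ : CrFun s) (hs : 1 ≤ s) (n : ℕ) :
    0 ≤ useq E σ n :=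
  Real.log_nonneg (nQ_one_le E σ (σ.dsup + 1) (by linarith [dsup_nonneg σ hs]) n)

lemma useq_bdd (E : ExpMap r ℓ) {s : ℕ∞} (σ : CrFun s) (hs : 1 ≤ s) :
    BddBelow (Set.range fun n : ℕ => useq E σ n / n) := by
  refine ⟨0, ?_⟩
  rintro y ⟨n, rfl⟩
  exact div_nonneg (useq_nonneg E σ hs n) (Nat.cast_nonneg n)

lemma rpow_eq_exp_useq (E : ExpMap r ℓ) {s : ℕ∞} (σ : CrFun s) (hs : 1 ≤ s) (n : ℕ) :
    nQ E σ (σ.dsup + 1) n ^ ((n : ℝ)⁻¹) = Real.exp (useq E σ n / n) := by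
  rw [Real.rpow_def_of_pos (nQ_pos E σ hs n), div_eq_mul_inv]
  rfl

lemma nlim_eq_exp (E : ExpMap r ℓ) {s : ℕ∞} (σ : CrFun s) (hs : 1 ≤ s) :
    nlim E σ = Real.exp (useq_subadd E σ hs).lim := by
  have htend := (useq_subadd E σ hs).tendsto_lim (useq_bdd E σ hs)
  have htend2 : Tendsto (fun n : ℕ => nQ E σ (σ.dsup + 1) n ^ ((n : ℝ)⁻¹)) atTop
      (𝓝 (Real.exp (useq_subadd E σ hs).lim)) := by
    have := (Real.continuous_exp.tendsto _).comp htend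
    apply this.congr
    intro n
    exact (rpow_eq_exp_useq E σ hs n).symm
  exact htend2.limUnder_eq

lemma nlim_le_rpow (E : ExpMap r ℓ) {s : ℕ∞} (σ : CrFun s) (hs : 1 ≤ s)
    (N : ℕ) (hN : N ≠ 0) :
    nlim E σ ≤ nQ E σ (σ.dsup + 1) N ^ ((N : ℝ)⁻¹) := by
  rw [nlim_eq_exp E σ hs, rpow_eq_exp_useq E σ hs N]
  exact Real.exp_le_exp.mpr ((useq_subadd E σ hs).lim_le_div (useq_bdd E σ hs) hN)

/-! ### crDist facts -/

lemma crDist_bddAbove (r₀ : ℕ) (f g : ℝ → ℝ)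
    (hf : ContDiff ℝ r₀ f) (hg : ContDiff ℝ r₀ g) :
    BddAbove {c : ℝ | ∃ i ≤ r₀, ∃ x ∈ Set.Icc (0:ℝ) 1,
      c = |iteratedDeriv i f x - iteratedDeriv i g x|} := by
  have hset : {c : ℝ | ∃ i ≤ r₀, ∃ x ∈ Set.Icc (0:ℝ) 1,
      c = |iteratedDeriv i f x - iteratedDeriv i g x|}
      = ⋃ i ∈ Set.Iic r₀,
        ((fun x => |iteratedDeriv i f x - iteratedDeriv i g x|) '' Set.Icc (0:ℝ) 1) := by
    ext c
    simp only [Set.mem_setOf_eq, Set.mem_iUnion, Set.mem_Iic, Set.mem_image]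
    constructor
    · rintro ⟨i, hi, x, hx, rfl⟩; exact ⟨i, hi, x, hx, rfl⟩
    · rintro ⟨i, hi, x, hx, rfl⟩; exact ⟨i, hi, x, hx, rfl⟩
  rw [hset, (Set.finite_Iic r₀).bddAbove_biUnion]
  intro i hi
  rw [Set.mem_Iic] at hi
  have hci : Continuous fun x => |iteratedDeriv i f x - iteratedDeriv i g x| := by
    apply Continuous.abs
    exact ((hf.continuous_iteratedDeriv i (by exact_mod_cast hi)).sub
      (hg.continuous_iteratedDeriv i (by exact_mod_cast hi)))
  exact (isCompact_Icc.image hci).bddAbove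

lemma abs_deriv_sub_le_crDist {s : ℕ∞} (τ σ : CrFun s) (r₀ : ℕ) (hr₀ : 1 ≤ r₀)
    (hτ : ContDiff ℝ r₀ τ.toFun) (hσ : ContDiff ℝ r₀ σ.toFun) (t : ℝ) :
    |deriv σ.toFun t - deriv τ.toFun t| ≤ crDist r₀ τ.toFun σ.toFun := by
  have hper : ∀ (ψ : CrFun s), deriv ψ.toFun (Int.fract t) = deriv ψ.toFun t := by
    intro ψ
    unfold Int.fract
    have := (deriv_periodic ψ).sub_zsmul_eq (x := t) ⌊t⌋
    simpa using this
  rw [← hper σ, ← hper τ]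
  apply le_csSup (crDist_bddAbove r₀ τ.toFun σ.toFun hτ hσ)
  refine ⟨1, hr₀, Int.fract t, ⟨Int.fract_nonneg t, (Int.fract_lt_one t).le⟩, ?_⟩
  simp [iteratedDeriv_one, abs_sub_comm]

lemma dsup_le_add_crDist {s : ℕ∞} (τ σ : CrFun s) (hs : 1 ≤ s) (r₀ : ℕ) (hr₀ : 1 ≤ r₀)
    (hτ : ContDiff ℝ r₀ τ.toFun) (hσ : ContDiff ℝ r₀ σ.toFun) :
    σ.dsup ≤ τ.dsup + crDist r₀ τ.toFun σ.toFun := by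
  apply dsup_le
  intro t _
  calc |deriv σ.toFun t|
      ≤ |deriv τ.toFun t| + |deriv σ.toFun t - deriv τ.toFun t| := by
        have := abs_add_le (deriv τ.toFun t) (deriv σ.toFun t - deriv τ.toFun t)
        simpa using this
    _ ≤ τ.dsup + crDist r₀ τ.toFun σ.toFun :=
        add_le_add (abs_deriv_le_dsup τ hs t)
          (abs_deriv_sub_le_crDist τ σ r₀ hr₀ hτ hσ t)

end St5

/-- Let `D` be a bounded open subset of `C^r(𝕊¹)` and fix `R` with
`R > ‖τ'‖_∞` for all `τ ∈ D`. For every `ρ > 0`, the set `{τ ∈ D : 𝔫(τ) < e^ρ}` is open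
in `D` for the `C^r` topology. -/
theorem stmt5 (r ℓ : ℕ) (hr : 2 ≤ r) (hl : 2 ≤ ℓ) (E : ExpMap r ℓ)
    (D : Set (CrFun r))
    (hDopen : ∀ τ ∈ D, ∃ ε > (0:ℝ), ∀ σ : CrFun r, crDist r τ.toFun σ.toFun < ε → σ ∈ D)
    (hDbdd : ∃ M : ℝ, ∀ τ ∈ D, crDist r τ.toFun 0 ≤ M)
    (R : ℝ) (hR : ∀ τ ∈ D, τ.dsup < R)
    (ρ : ℝ) (hρ : 0 < ρ) :
    ∀ τ ∈ D, nlim E τ < Real.exp ρ →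
      ∃ ε > (0:ℝ), ∀ σ ∈ D, crDist r τ.toFun σ.toFun < ε → nlim E σ < Real.exp ρ := by
  intro τ hτD hnl
  have hr1 : 1 ≤ r := le_trans one_le_two hr
  have hs : (1 : ℕ∞) ≤ (r : ℕ∞) := by exact_mod_cast hr1
  -- Fekete limit for τ
  have hsubτ := St5.useq_subadd E τ hs
  have hbddτ := St5.useq_bdd E τ hs
  have hlimτ : nlim E τ = Real.exp hsubτ.lim := St5.nlim_eq_exp E τ hs
  have hL : hsubτ.lim < ρ := by
    rw [hlimτ] at hnl
    exact Real.exp_lt_exp.mp hnl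
  -- choose the contraction time m₀
  obtain ⟨m₀, hm₀⟩ := pow_unbounded_of_one_lt (2:ℝ) E.one_lt_lam
  have h2m : (2:ℝ) ≤ E.lam ^ m₀ := hm₀.le
  set C : ℝ := (((ℓ + 2) ^ m₀ : ℕ) : ℝ) with hC
  have hCpos : 0 < C := by positivity
  -- intermediate exponent
  set ρ1 : ℝ := (hsubτ.lim + ρ) / 2 with hρ1
  have hρ1a : hsubτ.lim < ρ1 := by rw [hρ1]; linarith
  have hρ1b : ρ1 < ρ := by rw [hρ1]; linarith
  -- find a good time n
  have htend := hsubτ.tendsto_lim hbddτ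
  have h1 : ∀ᶠ n : ℕ in Filter.atTop, St5.useq E τ n / n < ρ1 :=
    htend.eventually_lt_const hρ1a
  have h2' : Filter.Tendsto (fun n : ℕ => (ρ - ρ1) * n) Filter.atTop Filter.atTop :=
    (tendsto_natCast_atTop_atTop).const_mul_atTop (by linarith)
  have h2 : ∀ᶠ n : ℕ in Filter.atTop, Real.log C - ρ * m₀ < (ρ - ρ1) * n :=
    h2'.eventually_gt_atTop _
  obtain ⟨n, hn⟩ := ((h1.and h2).and (Filter.eventually_ge_atTop 1)).exists
  obtain ⟨⟨h1n, h2n⟩, hn1⟩ := hn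
  set n₀ : ℕ := n + m₀ with hn₀
  have hn₀ne : n₀ ≠ 0 := by omega
  have hnpos : (0:ℝ) < (n : ℝ) := by exact_mod_cast hn1
  -- the key counting bound for τ at parameter dsup+2
  have hnQτn : nQ E τ (τ.dsup + 1) n < Real.exp (ρ1 * n) := by
    have hu : St5.useq E τ n < ρ1 * n := by
      have := (div_lt_iff₀ hnpos).mp h1n
      linarith
    calc nQ E τ (τ.dsup + 1) n
        = Real.exp (St5.useq E τ n) := (Real.exp_log (St5.nQ_pos E τ hs n)).symm
      _ < Real.exp (ρ1 * n) := Real.exp_lt_exp.mpr hu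
  have hM₀ : nQ E τ (τ.dsup + 2) n₀ < Real.exp (ρ * n₀) := by
    calc nQ E τ (τ.dsup + 2) n₀ ≤ C * nQ E τ (τ.dsup + 1) n :=
          St5.nQ_Rchange E τ hs m₀ h2m n
      _ < C * Real.exp (ρ1 * n) := by
          exact mul_lt_mul_of_pos_left hnQτn hCpos
      _ ≤ Real.exp (ρ * n₀) := by
          rw [← Real.exp_log hCpos, ← Real.exp_add]
          apply Real.exp_le_exp.mpr
          have hcast : ((n₀ : ℕ) : ℝ) = (n : ℝ) + (m₀ : ℝ) := by
            rw [hn₀]; push_cast; ring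
          rw [hcast]
          nlinarith [h2n]
  -- choose ε
  have hΛpos : (0:ℝ) < E.Lam :=
    lt_of_lt_of_le (lt_trans one_pos E.one_lt_lam) E.lam_le_Lam
  set ε : ℝ := (E.Lam ^ n₀)⁻¹ with hε
  have hεpos : 0 < ε := by positivity
  refine ⟨ε, hεpos, ?_⟩
  intro σ hσD hdist
  -- comparison at time n₀
  have hd : ∀ t : ℝ, |deriv σ.toFun t - deriv τ.toFun t| ≤ ε := fun t =>
    le_of_lt (lt_of_le_of_lt
      (St5.abs_deriv_sub_le_crDist τ σ r hr1 τ.contDiff σ.contDiff t) hdist)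
  have hdsupb : σ.dsup ≤ τ.dsup + ε :=
    le_trans (St5.dsup_le_add_crDist τ σ hs r hr1 τ.contDiff σ.contDiff)
      (by linarith [hdist])
  have hεΛ : ε * E.Lam ^ n₀ ≤ 1 := by
    rw [hε, inv_mul_cancel₀ (ne_of_gt (pow_pos hΛpos n₀))]
  have hcomp : nQ E σ (σ.dsup + 1) n₀ ≤ nQ E τ (τ.dsup + 2) n₀ :=
    St5.nQ_compare E τ σ hs n₀ ε hεpos.le hd hdsupb hεΛ
  -- conclude via the Fekete bound for σ
  have hfin : nQ E σ (σ.dsup + 1) n₀ < Real.exp (ρ * n₀) :=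
    lt_of_le_of_lt hcomp hM₀
  have hstep : nlim E σ ≤ nQ E σ (σ.dsup + 1) n₀ ^ ((n₀ : ℝ)⁻¹) :=
    St5.nlim_le_rpow E σ hs n₀ hn₀ne
  have hn₀pos : (0:ℝ) < (n₀ : ℝ) := by
    have : 0 < n₀ := by omega
    exact_mod_cast this
  calc nlim E σ ≤ nQ E σ (σ.dsup + 1) n₀ ^ ((n₀ : ℝ)⁻¹) := hstep
    _ < Real.exp (ρ * n₀) ^ ((n₀ : ℝ)⁻¹) :=
        Real.rpow_lt_rpow (St5.nQ_nonneg E σ _ _) hfin (by positivity)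
    _ = Real.exp ρ := by
        rw [Real.rpow_def_of_pos (Real.exp_pos _), Real.log_exp,
          mul_assoc, mul_inv_cancel₀ (ne_of_gt hn₀pos), mul_one]
end
end
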